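/- arXiv:1806.01752 — 5 statements merged into one kernel-verified Lean document; each statement's English description precedes it below -/
import Mathlib

section
/- Let A be a finitely generated abelian group and Q ⊂ (A ⊗_ℤ ℝ)^* a closed salient cone. Then there exist elements y₀,…,y_k ∈ A which generate A as a group and satisfy 0 ⪯_Q y_i for every i (i.e. f(y_i ⊗ 1) ≥ 0 for all f ∈ Q). -/
/-- An additive character `A → ℝ`.  Under the hom-tensor adjunction
`Hom_ℝ(A ⊗_ℤ ℝ, ℝ) ≅ Hom_ℤ(A, ℝ)`, such functions correspond exactly to the elements of the
real dual `(A ⊗_ℤ ℝ)^*` of the (multiplicatively written) abelian group `A`. -/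
def IsAddChar {A : Type*} [CommGroup A] (f : A → ℝ) : Prop :=
  ∀ x y : A, f (x * y) = f x + f y

/-- `Q` is a cone in `(A ⊗_ℤ ℝ)^*`: all of its elements lie in the dual space
(i.e. are additive characters) and `Q` is closed under positive linear combinations. -/
def IsFunctionalCone {A : Type*} [CommGroup A] (Q : Set (A → ℝ)) : Prop :=
  (∀ f ∈ Q, IsAddChar f) ∧
    ∀ f ∈ Q, ∀ g ∈ Q, ∀ α β : ℝ, 0 < α → 0 < β → α • f + β • g ∈ Q

/-- The relation `x ⪯_Q y`, i.e. `f((y·x⁻¹) ⊗ 1) ≥ 0` for all `f ∈ Q`. -/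
def ConePreorder {A : Type*} [CommGroup A] (Q : Set (A → ℝ)) (x y : A) : Prop :=
  ∀ f ∈ Q, 0 ≤ f (y * x⁻¹)

/-- A cone is salient if for every nonzero `f ∈ Q` we have `-f ∉ Q`. -/
def IsSalientCone {A : Type*} [CommGroup A] (Q : Set (A → ℝ)) : Prop :=
  ∀ f ∈ Q, f ≠ 0 → -f ∉ Q

/-- `y` is a `Q`-cofinal element: `0 ⪯_Q y` and the powers of `y` are cofinal in `(A, ⪯_Q)`. -/
def IsCofinalElt {A : Type*} [CommGroup A] (Q : Set (A → ℝ)) (y : A) : Prop :=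
  ConePreorder Q 1 y ∧ ∀ a : A, ∃ n : ℕ, ConePreorder Q a (y ^ n)



open Finset

lemma coord_le_norm {n : ℕ} (x : EuclideanSpace ℝ (Fin n)) (i : Fin n) : |x i| ≤ ‖x‖ := by
  rw [EuclideanSpace.norm_eq, show |x i| = √(‖x i‖^2) by
    rw [Real.norm_eq_abs, sq_abs, Real.sqrt_sq_eq_abs]]
  exact Real.sqrt_le_sqrt (Finset.single_le_sum (f := fun j => ‖x j‖^2)
    (fun j _ => by positivity) (Finset.mem_univ i))

section core
variable {n : ℕ} {C : Set (EuclideanSpace ℝ (Fin n))}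
  (hcone : ∀ f ∈ C, ∀ g ∈ C, ∀ α β : ℝ, 0 < α → 0 < β → α • f + β • g ∈ C)

include hcone in
lemma smul_memC {f : EuclideanSpace ℝ (Fin n)} (hf : f ∈ C) {α : ℝ} (hα : 0 < α) :
    α • f ∈ C := by
  have := hcone f hf f hf (α/2) (α/2) (by linarith) (by linarith)
  rwa [← add_smul, add_halves] at this

include hcone in
lemma core_lemma (hC : IsClosed C)
    (hsal : ∀ f ∈ C, f ≠ 0 → -f ∉ C) :
    ∃ m : Fin n → ℤ, ∀ f ∈ C, ‖f‖ ≤ ∑ i, (m i : ℝ) * f i := by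
  classical
  -- the proper cone C ∪ {0}
  let K : ProperCone ℝ (EuclideanSpace ℝ (Fin n)) :=
    { carrier := C ∪ {0}
      add_mem' := by
        rintro x y (hx | hx) (hy | hy)
        · left
          have := hcone x hx y hy 1 1 one_pos one_pos
          simpa using this
        · simp only [Set.mem_singleton_iff] at hy; subst hy; left; simpa using hx
        · simp only [Set.mem_singleton_iff] at hx; subst hx; left; simpa using hy
        · simp only [Set.mem_singleton_iff] at hx hy; subst hx; subst hy; right; simp
      zero_mem' := by right; rfl
      smul_mem' := by
        rintro ⟨c, hc⟩ x (hx | hx)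
        · rcases eq_or_lt_of_le hc with hc0 | hc0
          · right; simp [← hc0]
          · left
            have : c • x ∈ C := smul_memC hcone hx hc0
            simpa using this
        · simp only [Set.mem_singleton_iff] at hx; subst hx; right; simp
      isClosed' := hC.union isClosed_singleton }
  have hKmem : ∀ x, x ∈ K ↔ x ∈ C ∪ {0} := fun _ => Iff.rfl
  set D := ProperCone.innerDual (K : Set (EuclideanSpace ℝ (Fin n))) with hD
  have hDconv : Convex ℝ (D : Set (EuclideanSpace ℝ (Fin n))) := ((D : PointedCone ℝ (EuclideanSpace ℝ (Fin n))) : ConvexCone ℝ (EuclideanSpace ℝ (Fin n))).convex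
  have h0D : (0 : EuclideanSpace ℝ (Fin n)) ∈ (D : Set (EuclideanSpace ℝ (Fin n))) := D.toSubmodule.zero_mem
  -- interior of D is nonempty
  have hint : (interior (D : Set (EuclideanSpace ℝ (Fin n)))).Nonempty := by
    rw [hDconv.interior_nonempty_iff_affineSpan_eq_top]
    by_contra htop
    have hW : (Submodule.span ℝ (D : Set (EuclideanSpace ℝ (Fin n))))ᗮ ≠ ⊥ := by
      intro h
      apply htop
      have hsp : Submodule.span ℝ (D : Set (EuclideanSpace ℝ (Fin n))) = ⊤ :=
        Submodule.orthogonal_eq_bot_iff.mp h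
      rw [← AffineSubspace.coe_eq_univ_iff]
      have hcoe : (affineSpan ℝ (D : Set (EuclideanSpace ℝ (Fin n))) :
          Set (EuclideanSpace ℝ (Fin n)))
          = Submodule.span ℝ (D : Set (EuclideanSpace ℝ (Fin n))) := by
        rw [← affineSpan_insert_zero, Set.insert_eq_self.mpr h0D]
      rw [hcoe, hsp]
      rfl
    obtain ⟨w, hwmem, hwne⟩ := Submodule.exists_mem_ne_zero_of_ne_bot hW
    have hwperp : ∀ x ∈ (D : Set (EuclideanSpace ℝ (Fin n))), (inner ℝ x w : ℝ) = 0 := by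
      intro x hx
      have hxW : x ∈ Submodule.span ℝ (D : Set (EuclideanSpace ℝ (Fin n))) :=
        Submodule.subset_span hx
      exact real_inner_comm x w ▸ (Submodule.mem_orthogonal _ w).mp hwmem x hxW
    have hwD : w ∈ ProperCone.innerDual (D : Set (EuclideanSpace ℝ (Fin n))) := ProperCone.mem_innerDual.mpr fun x hx => (hwperp x hx).ge
    have hwD' : -w ∈ ProperCone.innerDual (D : Set (EuclideanSpace ℝ (Fin n))) := ProperCone.mem_innerDual.mpr fun x hx => by
      rw [inner_neg_right, hwperp x hx, neg_zero]
    rw [hD, ProperCone.innerDual_innerDual] at hwD hwD'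
    have hwC : w ∈ C := by
      rcases (hKmem w).mp hwD with h | h
      · exact h
      · exact absurd h hwne
    have hwC' : -w ∈ C := by
      rcases (hKmem (-w)).mp hwD' with h | h
      · exact h
      · exact absurd (neg_eq_zero.mp h) hwne
    exact hsal w hwC hwne hwC'
  -- extract a uniform positive functional
  obtain ⟨u, hu⟩ := hint
  obtain ⟨ε, hε, hball⟩ := Metric.isOpen_iff.mp isOpen_interior u hu
  have hlow : ∀ f ∈ C, (ε / 2) * ‖f‖ ≤ (inner ℝ f u : ℝ) := by
    intro f hf
    by_cases hfe : f = 0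
    · simp [hfe]
    · have hnorm : (0:ℝ) < ‖f‖ := norm_pos_iff.mpr hfe
      have hy : u - (ε / 2) • (‖f‖⁻¹ • f) ∈ D := by
        apply interior_subset
        apply hball
        rw [Metric.mem_ball, dist_eq_norm]
        have : u - (ε / 2) • (‖f‖⁻¹ • f) - u = -((ε / 2) • (‖f‖⁻¹ • f)) := by abel
        rw [this, norm_neg, norm_smul, norm_smul, norm_inv, norm_norm,
          inv_mul_cancel₀ hnorm.ne', mul_one, Real.norm_eq_abs, abs_of_pos (by linarith)]
        linarith
      have hfK : f ∈ K := (hKmem f).mpr (Or.inl hf)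
      have h0 : (0:ℝ) ≤ inner ℝ f (u - (ε / 2) • (‖f‖⁻¹ • f)) :=
        (ProperCone.mem_innerDual.mp hy) hfK
      rw [inner_sub_right, inner_smul_right, inner_smul_right,
        real_inner_self_eq_norm_sq] at h0
      have : (ε / 2) * (‖f‖⁻¹ * (‖f‖ * ‖f‖)) = (ε/2) * ‖f‖ := by
        field_simp
      nlinarith [h0]
  -- rescale
  set v : EuclideanSpace ℝ (Fin n) := (2 / ε) • u with hv
  have hvlow : ∀ f ∈ C, ‖f‖ ≤ ∑ i, v i * f i := by
    intro f hf
    have h1 := hlow f hf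
    have h2 : (inner ℝ f v : ℝ) = (2/ε) * (inner ℝ f u : ℝ) := by
      rw [hv, inner_smul_right]
    have h3 : (inner ℝ f v : ℝ) = ∑ i, v i * f i := by
      rw [real_inner_comm, PiLp.inner_apply]
      simp [RCLike.inner_apply, mul_comm]
    rw [← h3, h2]
    rw [div_mul_eq_mul_div, le_div_iff₀ hε]
    nlinarith
  -- integer approximation
  refine ⟨fun i => round ((n + 1 : ℝ) * v i), fun f hf => ?_⟩
  have key : ∀ i, |((round ((n + 1 : ℝ) * v i) : ℝ)) - (n + 1 : ℝ) * v i| ≤ 1/2 := by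
    intro i
    rw [abs_sub_comm]
    exact abs_sub_round _
  have hfi : ∀ i, |f i| ≤ ‖f‖ := coord_le_norm f
  have hsum : ∑ i, ((round ((n + 1 : ℝ) * v i) : ℝ)) * f i ≥
      (n+1 : ℝ) * ∑ i, v i * f i - (n / 2 : ℝ) * ‖f‖ := by
    have heq : ∑ i, ((round ((n + 1 : ℝ) * v i) : ℝ)) * f i
        = ∑ i, (n+1 : ℝ) * (v i * f i) +
          ∑ i, (((round ((n + 1 : ℝ) * v i) : ℝ)) - (n + 1 : ℝ) * v i) * f i := by
      rw [← Finset.sum_add_distrib]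
      congr 1; ext i; ring
    rw [heq, ← Finset.mul_sum]
    have hb : |∑ i, (((round ((n + 1 : ℝ) * v i) : ℝ)) - (n + 1 : ℝ) * v i) * f i|
        ≤ (n / 2 : ℝ) * ‖f‖ := by
      calc |∑ i, (((round ((n + 1 : ℝ) * v i) : ℝ)) - (n + 1 : ℝ) * v i) * f i|
          ≤ ∑ i, |(((round ((n + 1 : ℝ) * v i) : ℝ)) - (n + 1 : ℝ) * v i) * f i| :=
            Finset.abs_sum_le_sum_abs _ _
        _ ≤ ∑ _i : Fin n, (1/2 : ℝ) * ‖f‖ := by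
            apply Finset.sum_le_sum
            intro i _
            rw [abs_mul]
            exact mul_le_mul (key i) (hfi i) (abs_nonneg _) (by norm_num)
        _ = (n / 2 : ℝ) * ‖f‖ := by
            rw [Finset.sum_const, Finset.card_univ, Fintype.card_fin]
            simp; ring
    have := neg_le_of_abs_le hb
    linarith
  have := hvlow f hf
  have hn : (0:ℝ) ≤ n := Nat.cast_nonneg n
  nlinarith [norm_nonneg f]
end core

section chars
variable {A : Type*} [CommGroup A] {f : A → ℝ} (hf : IsAddChar f)

include hf

lemma addChar_one : f 1 = 0 := by
  have := hf 1 1; simp at this; linarith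

lemma addChar_inv (x : A) : f x⁻¹ = -f x := by
  have := hf x x⁻¹
  rw [mul_inv_cancel, addChar_one hf] at this
  linarith

lemma addChar_pow (x : A) (k : ℕ) : f (x ^ k) = k * f x := by
  induction k with
  | zero => simpa using addChar_one hf
  | succ k ih => rw [pow_succ, hf, ih, Nat.cast_succ]; ring

lemma addChar_zpow (x : A) (m : ℤ) : f (x ^ m) = m * f x := by
  cases m with
  | ofNat k => simpa using addChar_pow hf x k
  | negSucc k =>
      rw [zpow_negSucc, addChar_inv hf, addChar_pow hf]
      push_cast; ring

lemma addChar_prod {ι : Type*} (s : Finset ι) (h : ι → A) :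
    f (∏ i ∈ s, h i) = ∑ i ∈ s, f (h i) := by
  classical
  induction s using Finset.induction_on with
  | empty => simpa using addChar_one hf
  | insert _ _ ha ih =>
      rename_i a s
      rw [Finset.prod_insert ha, Finset.sum_insert ha, hf, ih]

lemma addChar_eval {n : ℕ} (g : Fin n → A) (m : Fin n → ℤ) :
    f (∏ i, g i ^ m i) = ∑ i, (m i : ℝ) * f (g i) := by
  rw [addChar_prod hf]
  exact Finset.sum_congr rfl fun i _ => addChar_zpow hf (g i) (m i)

end chars

lemma exists_repr {A : Type*} [CommGroup A] {n : ℕ} (g : Fin n → A)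
    (hg : Subgroup.closure (Set.range g) = ⊤) (a : A) :
    ∃ m : Fin n → ℤ, a = ∏ i, g i ^ m i := by
  classical
  have ha : a ∈ Subgroup.closure (Set.range g) := hg ▸ Subgroup.mem_top a
  induction ha using Subgroup.closure_induction with
  | mem x hx =>
      obtain ⟨i, rfl⟩ := hx
      refine ⟨Pi.single i 1, ?_⟩
      rw [Fintype.prod_eq_single i (fun j hj => by simp [Pi.single_eq_of_ne hj])]
      simp
  | one => exact ⟨0, by simp⟩
  | mul x y _ _ hx hy =>
      obtain ⟨m₁, rfl⟩ := hx
      obtain ⟨m₂, rfl⟩ := hy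
      exact ⟨m₁ + m₂, by rw [← Finset.prod_mul_distrib]; simp [zpow_add]⟩
  | inv x _ hx =>
      obtain ⟨m, rfl⟩ := hx
      exact ⟨-m, by rw [← Finset.prod_inv_distrib]; simp [zpow_neg]⟩


/-- for a closed salient cone `Q ⊆ (A ⊗_ℤ ℝ)^*` (`A` finitely generated),
there are elements `y₀,…,y_k` generating `A` as a group with `0 ⪯_Q yᵢ` for all `i`.
The topology on the dual space is that of pointwise convergence (which agrees with the
standard topology on the finite dimensional space `(A ⊗_ℤ ℝ)^*`). -/
theorem exists_nonneg_generators {A : Type*} [CommGroup A] [Group.FG A]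
    (Q : Set (A → ℝ)) (hQ : IsFunctionalCone Q) (hclosed : IsClosed Q)
    (hsalient : IsSalientCone Q) :
    ∃ s : Finset A, Subgroup.closure (s : Set A) = ⊤ ∧ ∀ y ∈ s, ConePreorder Q 1 y := by
  classical
  obtain ⟨S, hScl, hSfin⟩ := Group.fg_iff.mp (inferInstance : Group.FG A)
  set T : Finset A := hSfin.toFinset with hT
  set n : ℕ := T.card with hn
  set g : Fin n → A := fun i => (T.equivFin.symm i : A) with hgdef
  have hrange : Set.range g = (T : Set A) := by
    ext a
    constructor
    · rintro ⟨i, rfl⟩; exact (T.equivFin.symm i).2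
    · intro ha; exact ⟨T.equivFin ⟨a, ha⟩, by simp [hgdef]⟩
  have hgtop : Subgroup.closure (Set.range g) = ⊤ := by
    rw [hrange]
    rw [hT]
    rw [Set.Finite.coe_toFinset]
    exact hScl
  -- coordinates
  choose c hc using exists_repr g hgtop
  have heval : ∀ f ∈ Q, ∀ a : A, f a = ∑ i, (c a i : ℝ) * f (g i) := by
    intro f hf a
    conv_lhs => rw [hc a]
    exact addChar_eval (hQ.1 f hf) g (c a)
  -- transfer to Euclidean space
  set φ : (A → ℝ) → EuclideanSpace ℝ (Fin n) := fun f => WithLp.toLp 2 fun i => f (g i) with hφ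
  set C : Set (EuclideanSpace ℝ (Fin n)) := φ '' Q with hC
  have hconeC : ∀ x ∈ C, ∀ y ∈ C, ∀ α β : ℝ, 0 < α → 0 < β → α • x + β • y ∈ C := by
    rintro x ⟨f, hf, rfl⟩ y ⟨h, hh, rfl⟩ α β hα hβ
    refine ⟨α • f + β • h, hQ.2 f hf h hh α β hα hβ, ?_⟩
    ext i
    simp [hφ]
  have hCclosed : IsClosed C := by
    rw [← isSeqClosed_iff_isClosed]
    intro x v hx hxv
    choose fk hfkQ hfkφ using hx
    set f : A → ℝ := fun a => ∑ i, (c a i : ℝ) * v i with hfdef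
    have hvi : ∀ i, Filter.Tendsto (fun k => x k i) Filter.atTop (nhds (v i)) := by
      intro i
      have := ((EuclideanSpace.proj (𝕜 := ℝ) i).continuous.tendsto v).comp hxv
      exact this
    have htend : Filter.Tendsto fk Filter.atTop (nhds f) := by
      rw [tendsto_pi_nhds]
      intro a
      have h1 : ∀ k, fk k a = ∑ i, (c a i : ℝ) * x k i := by
        intro k
        rw [heval (fk k) (hfkQ k) a]
        exact Finset.sum_congr rfl fun i _ => by rw [← hfkφ k]
      simp only [h1, hfdef]
      exact tendsto_finset_sum _ fun i _ => ((hvi i).const_mul _)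
    have hfQ : f ∈ Q := hclosed.mem_of_tendsto htend (Filter.Eventually.of_forall hfkQ)
    refine ⟨f, hfQ, ?_⟩
    ext i
    have h2 : Filter.Tendsto (fun k => fk k (g i)) Filter.atTop (nhds (f (g i))) :=
      tendsto_pi_nhds.mp htend (g i)
    have h3 : Filter.Tendsto (fun k => fk k (g i)) Filter.atTop (nhds (v i)) := by
      have : (fun k => fk k (g i)) = fun k => x k i := by
        funext k; rw [← hfkφ k]
      rw [this]; exact hvi i
    exact tendsto_nhds_unique h2 h3
  have hsalC : ∀ x ∈ C, x ≠ 0 → -x ∉ C := by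
    rintro x ⟨f, hfQ, rfl⟩ hxne ⟨h, hhQ, hhφ⟩
    have hfne : f ≠ 0 := by
      rintro rfl
      apply hxne
      ext i
      simp [hφ]
    have hhf : h = -f := by
      funext a
      rw [heval h hhQ a, show (-f) a = -f a from rfl, heval f hfQ a, ← Finset.sum_neg_distrib]
      refine Finset.sum_congr rfl fun i _ => ?_
      have : h (g i) = -(f (g i)) := by
        have := congrArg (fun x => x i) hhφ
        simpa [hφ] using this
      rw [this]; ring
    exact hsalient f hfQ hfne (hhf ▸ hhQ)
  obtain ⟨m, hm⟩ := core_lemma hconeC hCclosed hsalC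
  set uA : A := ∏ i, g i ^ m i with huA
  have hfu : ∀ f ∈ Q, f uA = ∑ i, (m i : ℝ) * f (g i) := fun f hf =>
    addChar_eval (hQ.1 f hf) g m
  have hfu_ge : ∀ f ∈ Q, ‖φ f‖ ≤ f uA := by
    intro f hf
    rw [hfu f hf]
    exact hm (φ f) ⟨f, hf, rfl⟩
  refine ⟨insert uA (Finset.image (fun i => g i * uA) Finset.univ), ?_, ?_⟩
  · rw [eq_top_iff, ← hgtop]
    rw [Subgroup.closure_le]
    rintro a ⟨i, rfl⟩
    have hu : uA ∈ Subgroup.closure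
        ((insert uA (Finset.image (fun i => g i * uA) Finset.univ) : Finset A) : Set A) :=
      Subgroup.subset_closure (by simp)
    have hgi : g i * uA ∈ Subgroup.closure
        ((insert uA (Finset.image (fun i => g i * uA) Finset.univ) : Finset A) : Set A) := by
      apply Subgroup.subset_closure
      simp only [Finset.coe_insert, Set.mem_insert_iff, Finset.coe_image, Set.mem_image]
      right
      exact ⟨i, by simp⟩
    have : g i = (g i * uA) * uA⁻¹ := by group
    rw [this]
    exact Subgroup.mul_mem _ hgi (Subgroup.inv_mem _ hu)
  · intro y hy f hf
    rw [inv_one, mul_one]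
    have h0u : 0 ≤ f uA := le_trans (norm_nonneg _) (hfu_ge f hf)
    rcases Finset.mem_insert.mp hy with rfl | hy
    · exact h0u
    · obtain ⟨i, _, rfl⟩ := Finset.mem_image.mp hy
      rw [hQ.1 f hf]
      have h1 : |f (g i)| ≤ ‖φ f‖ := by
        have := coord_le_norm (φ f) i
        simpa [hφ] using this
      have := hfu_ge f hf
      have := neg_le_of_abs_le h1
      linarith
end

section
/- Let A be a finitely generated abelian group and let Q₀, Q₁ ⊂ (A ⊗_ℤ ℝ)^* be closed salient cones with Q₁ ⊂ Q₀. Then there exists y ∈ A which is simultaneously Q₀-cofinal and Q₁-cofinal; i.e. 0 ⪯_{Q_j} y and for every x ∈ A with 0 ⪯_{Q_j} x, there is n ∈ ℕ with x ⪯_{Q_j} yⁿ, for j = 0,1. -/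
open Finset

section AuxiliaryLemmas
variable {A : Type*} [CommGroup A]

lemma char_one {f : A → ℝ} (hf : IsAddChar f) : f 1 = 0 := by
  have h := hf 1 1; rw [mul_one] at h; linarith

lemma char_inv {f : A → ℝ} (hf : IsAddChar f) (x : A) : f x⁻¹ = -f x := by
  have h := hf x x⁻¹
  rw [mul_inv_cancel, char_one hf] at h
  linarith

lemma char_pow {f : A → ℝ} (hf : IsAddChar f) (x : A) (n : ℕ) : f (x ^ n) = n * f x := by
  induction n with
  | zero => simpa using char_one hf
  | succ n ih => rw [pow_succ, hf, ih]; push_cast; ring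

lemma char_zpow {f : A → ℝ} (hf : IsAddChar f) (x : A) (n : ℤ) : f (x ^ n) = n * f x := by
  cases n with
  | ofNat n => simpa using char_pow hf x n
  | negSucc n =>
      rw [zpow_negSucc, char_inv hf, char_pow hf]
      push_cast; ring

lemma char_prod {f : A → ℝ} (hf : IsAddChar f) {ι : Type*} (t : Finset ι) (g : ι → A) :
    f (∏ i ∈ t, g i) = ∑ i ∈ t, f (g i) := by
  classical
  induction t using Finset.cons_induction with
  | empty => simpa using char_one hf
  | cons a t ha ih => rw [Finset.prod_cons, hf, ih, Finset.sum_cons]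

private lemma sum_extend_emb {ι κ M : Type*} [Fintype ι] [Fintype κ] [AddCommMonoid M]
    (e : ι ↪ κ) (F : κ → M) (hF : ∀ j, (¬∃ i, e i = j) → F j = 0) :
    ∑ j, F j = ∑ i, F (e i) := by
  rw [← Finset.sum_map Finset.univ e F]
  refine (Finset.sum_subset (Finset.subset_univ _) ?_).symm
  intro j _ hj
  refine hF j fun ⟨i, hi⟩ => hj ?_
  exact Finset.mem_map.2 ⟨i, Finset.mem_univ _, hi⟩

lemma isCompact_convexHull_of_isCompact {E : Type*} [NormedAddCommGroup E] [NormedSpace ℝ E]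
    [FiniteDimensional ℝ E] {s : Set E} (hs : IsCompact s) : IsCompact (convexHull ℝ s) := by
  classical
  rcases s.eq_empty_or_nonempty with rfl | ⟨x₀, hx₀⟩
  · simp
  set N := Module.finrank ℝ E + 1 with hN
  have hgc : Continuous (fun p : (Fin N → ℝ) × (Fin N → E) => ∑ i, p.1 i • p.2 i) := by
    apply continuous_finset_sum
    intro i _
    exact ((continuous_apply i).comp continuous_fst).smul
      ((continuous_apply i).comp continuous_snd)
  have hdom : IsCompact ((stdSimplex ℝ (Fin N)) ×ˢ (Set.univ.pi fun _ : Fin N => s)) :=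
    (isCompact_stdSimplex ℝ _).prod (isCompact_univ_pi fun _ => hs)
  have himg : convexHull ℝ s
      = (fun p : (Fin N → ℝ) × (Fin N → E) => ∑ i, p.1 i • p.2 i) ''
        ((stdSimplex ℝ (Fin N)) ×ˢ (Set.univ.pi fun _ : Fin N => s)) := by
    apply Set.Subset.antisymm
    · intro x hx
      obtain ⟨ι, hfin, z, w, hzs, hind, hwpos, hwsum, hx⟩ :=
        eq_pos_convex_span_of_mem_convexHull hx
      have hcard : Fintype.card ι ≤ N :=
        hind.card_le_finrank_succ.trans (add_le_add_left (Submodule.finrank_le _) 1)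
      obtain ⟨e⟩ : Nonempty (ι ↪ Fin N) :=
        Function.Embedding.nonempty_of_card_le (by simpa using hcard)
      set w' : Fin N → ℝ := Function.extend e w 0 with hw'
      set z' : Fin N → E := Function.extend e z (fun _ => x₀) with hz'
      have hw'e : ∀ i, w' (e i) = w i := fun i => e.injective.extend_apply _ _ _
      have hz'e : ∀ i, z' (e i) = z i := fun i => e.injective.extend_apply _ _ _
      have hw'0 : ∀ j, (¬∃ i, e i = j) → w' j = 0 := fun j hj => by
        rw [hw', Function.extend_apply' _ _ _ hj]; rfl
      refine ⟨⟨w', z'⟩, ⟨⟨fun j => ?_, ?_⟩, fun j _ => ?_⟩, ?_⟩ <;> dsimp only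
      · by_cases hj : ∃ i, e i = j
        · obtain ⟨i, rfl⟩ := hj; rw [hw'e]; exact (hwpos i).le
        · rw [hw'0 j hj]
      · rw [sum_extend_emb e w' hw'0]
        simpa only [hw'e] using hwsum
      · by_cases hj : ∃ i, e i = j
        · obtain ⟨i, rfl⟩ := hj; rw [hz'e]; exact hzs (Set.mem_range_self i)
        · rw [hz', Function.extend_apply' _ _ _ hj]; exact hx₀
      · rw [sum_extend_emb e (fun j => w' j • z' j)
          (fun j hj => by show w' j • z' j = 0; rw [hw'0 j hj, zero_smul])]
        simpa only [hw'e, hz'e] using hx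
    · rintro x ⟨⟨w, z⟩, ⟨hw, hz⟩, rfl⟩
      exact (convex_convexHull ℝ s).sum_mem (fun i _ => hw.1 i)
        (by simpa using hw.2) (fun i _ => subset_convexHull ℝ s (hz i (Set.mem_univ i)))
  rw [himg]
  exact hdom.image hgc

/-- every element admits an integer word representation valid for all characters -/
lemma exists_rep (T : Finset A) (hT : Subgroup.closure (T : Set A) = ⊤) (a : A) :
    ∃ w : ↑T → ℤ, ∀ f : A → ℝ, IsAddChar f → f a = ∑ s : ↑T, (w s : ℝ) * f ↑s := by
  classical
  have ha : a ∈ Subgroup.closure (T : Set A) := hT ▸ Subgroup.mem_top a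
  induction ha using Subgroup.closure_induction with
  | mem x hx =>
      refine ⟨fun s => if (s : A) = x then 1 else 0, fun f hf => ?_⟩
      rw [Finset.sum_eq_single (⟨x, hx⟩ : ↑T)]
      · simp
      · intro s _ hs
        have : (s : A) ≠ x := fun h => hs (Subtype.ext h)
        simp [this]
      · simp
  | one => exact ⟨0, fun f hf => by simpa using char_one hf⟩
  | mul x y hx hy ihx ihy =>
      obtain ⟨w₁, h₁⟩ := ihx; obtain ⟨w₂, h₂⟩ := ihy
      refine ⟨w₁ + w₂, fun f hf => ?_⟩
      rw [hf, h₁ f hf, h₂ f hf, ← Finset.sum_add_distrib]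
      congr 1; funext s; simp only [Pi.add_apply, Pi.neg_apply]; push_cast; ring
  | inv x hx ihx =>
      obtain ⟨w₁, h₁⟩ := ihx
      refine ⟨-w₁, fun f hf => ?_⟩
      have h := hf x x⁻¹
      rw [mul_inv_cancel, char_one hf] at h
      have : f x⁻¹ = -f x := by linarith
      rw [this, h₁ f hf, ← Finset.sum_neg_distrib]
      congr 1; funext s; simp only [Pi.add_apply, Pi.neg_apply]; push_cast; ring

/-- restriction to the generators, as a linear map -/
noncomputable def res (T : Finset A) : (A → ℝ) →ₗ[ℝ] (↑T → ℝ) :=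
  LinearMap.pi fun s => LinearMap.proj (R := ℝ) (φ := fun _ : A => ℝ) ↑s

lemma res_apply (T : Finset A) (f : A → ℝ) (s : ↑T) : res T f s = f ↑s := rfl

lemma continuous_res (T : Finset A) : Continuous (res T) :=
  continuous_pi fun s => continuous_apply _

lemma res_eq_zero (T : Finset A) (hT : Subgroup.closure (T : Set A) = ⊤)
    {f : A → ℝ} (hf : IsAddChar f) (h : res T f = 0) : f = 0 := by
  funext a
  obtain ⟨w, hw⟩ := exists_rep T hT a
  have : ∀ s : ↑T, f ↑s = 0 := fun s => congrFun h s
  rw [Pi.zero_apply, hw f hf]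
  simp [this]

lemma ne_zero_res (T : Finset A) (hT : Subgroup.closure (T : Set A) = ⊤)
    {f : A → ℝ} (hf : IsAddChar f) (h : f ≠ 0) : res T f ≠ 0 :=
  fun h0 => h (res_eq_zero T hT hf h0)

lemma isCompactSphereAux (T : Finset A) (hT : Subgroup.closure (T : Set A) = ⊤)
    {Q : Set (A → ℝ)} (hch : ∀ f ∈ Q, IsAddChar f) (hcl : IsClosed Q) :
    IsCompact {f ∈ Q | ‖res T f‖ = 1} := by
  classical
  choose w hw using exists_rep T hT
  have hsub : {f ∈ Q | ‖res T f‖ = 1} ⊆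
      Set.univ.pi fun a : A => Set.Icc (-(∑ s : ↑T, |(w a s : ℝ)|)) (∑ s : ↑T, |(w a s : ℝ)|) := by
    rintro f ⟨hfQ, hfn⟩ a _
    have hbd : |f a| ≤ ∑ s : ↑T, |(w a s : ℝ)| := by
      rw [hw a f (hch f hfQ)]
      refine (Finset.abs_sum_le_sum_abs _ _).trans ?_
      refine Finset.sum_le_sum fun s _ => ?_
      rw [abs_mul]
      have h1 : |f ↑s| ≤ 1 := by
        have := norm_le_pi_norm (res T f) s
        rw [hfn] at this
        simpa [Real.norm_eq_abs, res_apply] using this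
      nlinarith [abs_nonneg ((w a s : ℝ)), abs_nonneg (f ↑s)]
    exact abs_le.1 hbd
  have hclosed : IsClosed {f ∈ Q | ‖res T f‖ = 1} :=
    hcl.inter (isClosed_eq (continuous_norm.comp (continuous_res T)) continuous_const)
  exact (isCompact_univ_pi fun a => isCompact_Icc).of_isClosed_subset hclosed hsub

lemma cone_smul {Q : Set (A → ℝ)} (hQ : IsFunctionalCone Q) {f : A → ℝ} (hf : f ∈ Q)
    {c : ℝ} (hc : 0 < c) : c • f ∈ Q := by
  have h := hQ.2 f hf f hf (c/2) (c/2) (by linarith) (by linarith)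
  have he : (c/2) • f + (c/2) • f = c • f := by
    funext a; simp only [Pi.add_apply, Pi.smul_apply, smul_eq_mul]; ring
  rwa [he] at h

lemma mem_sphere_smul (T : Finset A) {Q : Set (A → ℝ)} (hQ : IsFunctionalCone Q)
    {f : A → ℝ} (hf : f ∈ Q) (hne : res T f ≠ 0) :
    (‖res T f‖⁻¹ • f) ∈ {g ∈ Q | ‖res T g‖ = 1} := by
  have hpos : 0 < ‖res T f‖ := norm_pos_iff.2 hne
  refine ⟨cone_smul hQ hf (by positivity), ?_⟩
  rw [map_smul, norm_smul, Real.norm_eq_abs, abs_inv, abs_of_pos hpos]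
  field_simp

lemma cone_sum {Q : Set (A → ℝ)} (hQ : IsFunctionalCone Q) {ι : Type*} {t : Finset ι}
    (ht : t.Nonempty) {w : ι → ℝ} {g : ι → A → ℝ} (hw : ∀ i ∈ t, 0 < w i)
    (hg : ∀ i ∈ t, g i ∈ Q) : (∑ i ∈ t, w i • g i) ∈ Q := by
  classical
  induction t using Finset.cons_induction with
  | empty => exact absurd ht (by simp)
  | cons a t ha ih =>
      rcases t.eq_empty_or_nonempty with rfl | ht'
      · simpa using cone_smul hQ (hg a (by simp)) (hw a (by simp))
      · rw [Finset.sum_cons]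
        have hrest : (∑ i ∈ t, w i • g i) ∈ Q :=
          ih ht' (fun i hi => hw i (Finset.mem_cons_of_mem hi))
            (fun i hi => hg i (Finset.mem_cons_of_mem hi))
        have h := hQ.2 (g a) (hg a (Finset.mem_cons_self a t)) _ hrest
          (w a) 1 (hw a (Finset.mem_cons_self a t)) one_pos
        simpa using h

lemma exists_pos (T : Finset A) (hT : Subgroup.closure (T : Set A) = ⊤)
    {Q : Set (A → ℝ)} (hQ : IsFunctionalCone Q) (hcl : IsClosed Q) (hsal : IsSalientCone Q) :
    ∃ y : A, ∀ f ∈ Q, f ≠ 0 → 0 < f y := by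
  classical
  set K : Set (A → ℝ) := {f ∈ Q | ‖res T f‖ = 1} with hK
  have hKcpt : IsCompact K := isCompactSphereAux T hT hQ.1 hcl
  set D : Set (↑T → ℝ) := res T '' K with hD
  have hDcpt : IsCompact D := hKcpt.image (continuous_res T)
  have hHcpt : IsCompact (convexHull ℝ D) := isCompact_convexHull_of_isCompact hDcpt
  -- 0 is not in the convex hull of D
  have h0 : (0 : ↑T → ℝ) ∉ convexHull ℝ D := by
    intro h0
    rw [_root_.convexHull_eq] at h0
    obtain ⟨ι, t, w, z, hw0, hw1, hz, hcm⟩ := h0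
    rw [Finset.centerMass_eq_of_sum_1 _ _ hw1] at hcm
    have hzD : ∀ i, i ∈ t → ∃ g, (g ∈ K) ∧ res T g = z i := fun i hi => hz i hi
    choose! g hgK hgz using hzD
    set t' : Finset ι := t.filter (fun i => 0 < w i) with ht'
    have ht'sub : t' ⊆ t := Finset.filter_subset _ _
    have hw1' : ∑ i ∈ t', w i = 1 := by
      rw [ht', Finset.sum_filter_of_ne (fun i hi hne => (hw0 i hi).lt_of_ne (Ne.symm hne))]
      exact hw1
    have hsum' : ∑ i ∈ t', w i • z i = 0 := by
      rw [ht', Finset.sum_filter_of_ne, hcm]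
      intro i hi hne
      rcases (hw0 i hi).lt_or_eq with h | h
      · exact h
      · exact absurd (by rw [← h, zero_smul]) hne
    have ht'ne : t'.Nonempty := Finset.nonempty_of_sum_ne_zero (hw1' ▸ one_ne_zero)
    set G : A → ℝ := ∑ i ∈ t', w i • g i with hG
    have hGQ : G ∈ Q := cone_sum hQ ht'ne
      (fun i hi => (Finset.mem_filter.1 hi).2) (fun i hi => (hgK i (ht'sub hi)).1)
    have hGres : res T G = 0 := by
      rw [hG, map_sum]
      rw [← hsum']
      refine Finset.sum_congr rfl fun i hi => ?_
      rw [map_smul, hgz i (ht'sub hi)]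
    have hG0 : G = 0 := res_eq_zero T hT (hQ.1 G hGQ) hGres
    obtain ⟨i₀, hi₀⟩ := ht'ne
    have hwi₀ : 0 < w i₀ := (Finset.mem_filter.1 hi₀).2
    have hgi₀K : g i₀ ∈ K := hgK i₀ (ht'sub hi₀)
    have hgi₀ne : g i₀ ≠ 0 := by
      intro h
      have := hgi₀K.2
      rw [h, map_zero, norm_zero] at this
      exact one_ne_zero this.symm
    have hsplit : w i₀ • g i₀ + ∑ i ∈ t'.erase i₀, w i • g i = 0 := by
      rw [← hG0, hG]; exact Finset.add_sum_erase t' (fun i => w i • g i) hi₀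
    rcases (t'.erase i₀).eq_empty_or_nonempty with he | hne
    · rw [he, Finset.sum_empty, add_zero] at hsplit
      exact hgi₀ne (by simpa [hwi₀.ne'] using (smul_eq_zero.1 hsplit))
    · have hHQ : (∑ i ∈ t'.erase i₀, w i • g i) ∈ Q := cone_sum hQ hne
        (fun i hi => (Finset.mem_filter.1 (Finset.mem_of_mem_erase hi)).2)
        (fun i hi => (hgK i (ht'sub (Finset.mem_of_mem_erase hi))).1)
      have hmem : ((w i₀)⁻¹ • (∑ i ∈ t'.erase i₀, w i • g i)) ∈ Q :=
        cone_smul hQ hHQ (by positivity)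
      have heq : (w i₀)⁻¹ • (∑ i ∈ t'.erase i₀, w i • g i) = -(g i₀) := by
        have h' : (∑ i ∈ t'.erase i₀, w i • g i) = -(w i₀ • g i₀) := by
          rw [eq_neg_iff_add_eq_zero, add_comm]; exact hsplit
        rw [h', smul_neg, smul_smul, inv_mul_cancel₀ hwi₀.ne', one_smul]
      rw [heq] at hmem
      exact hsal (g i₀) hgi₀K.1 hgi₀ne hmem
  -- separate 0 from the hull
  obtain ⟨φ, u, hu0, hsep⟩ :=
    geometric_hahn_banach_point_closed (convex_convexHull ℝ D) hHcpt.isClosed h0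
  rw [map_zero] at hu0
  have hsepK : ∀ f ∈ K, u < φ (res T f) := fun f hf =>
    hsep _ (subset_convexHull ℝ D ⟨f, hf, rfl⟩)
  -- write φ in coordinates
  set c : ↑T → ℝ := fun s => φ (fun j => if s = j then 1 else 0) with hc
  have hφ : ∀ v : ↑T → ℝ, φ v = ∑ s : ↑T, v s • c s := fun v =>
    LinearMap.pi_apply_eq_sum_univ (φ : (↑T → ℝ) →ₗ[ℝ] ℝ) v
  -- choose an integer approximation
  obtain ⟨R, hR⟩ := exists_nat_gt (((T.card : ℝ) / 2) / u)
  have hRu : (T.card : ℝ) / 2 < R * u := by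
    rw [div_lt_iff₀ hu0] at hR
    linarith
  set m : ↑T → ℤ := fun s => round ((R : ℝ) * c s) with hm
  refine ⟨∏ s : ↑T, (s : A) ^ (m s), ?_⟩
  have hyK : ∀ f ∈ K, 0 < f (∏ s : ↑T, (s : A) ^ (m s)) := by
    intro f hf
    have hch : IsAddChar f := hQ.1 f hf.1
    have hval : f (∏ s : ↑T, (s : A) ^ (m s)) = ∑ s : ↑T, (m s : ℝ) * f ↑s := by
      rw [char_prod hch]
      exact Finset.sum_congr rfl fun s _ => char_zpow hch _ _
    have hfs : ∀ s : ↑T, |f ↑s| ≤ 1 := by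
      intro s
      have := norm_le_pi_norm (res T f) s
      rw [hf.2] at this
      simpa [Real.norm_eq_abs, res_apply] using this
    have hsplit : ∑ s : ↑T, (m s : ℝ) * f ↑s
        = (∑ s : ↑T, ((m s : ℝ) - R * c s) * f ↑s) + R * φ (res T f) := by
      rw [hφ (res T f), Finset.mul_sum, ← Finset.sum_add_distrib]
      refine Finset.sum_congr rfl fun s _ => ?_
      rw [res_apply]
      simp only [smul_eq_mul]
      ring
    have herr : |∑ s : ↑T, ((m s : ℝ) - R * c s) * f ↑s| ≤ (T.card : ℝ) / 2 := by
      refine (Finset.abs_sum_le_sum_abs _ _).trans ?_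
      have : ∀ s : ↑T, |((m s : ℝ) - R * c s) * f ↑s| ≤ 1 / 2 := by
        intro s
        rw [abs_mul]
        have h1 : |(m s : ℝ) - R * c s| ≤ 1 / 2 := by
          rw [hm, abs_sub_comm]
          exact abs_sub_round _
        nlinarith [abs_nonneg ((m s : ℝ) - R * c s), abs_nonneg (f ↑s), hfs s]
      refine (Finset.sum_le_sum fun s _ => this s).trans (le_of_eq ?_)
      rw [Finset.sum_const, Finset.card_univ, Fintype.card_coe, nsmul_eq_mul]
      ring
    have hφf : u < φ (res T f) := hsepK f hf
    have hRφ : (R : ℝ) * u ≤ R * φ (res T f) :=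
      mul_le_mul_of_nonneg_left hφf.le (Nat.cast_nonneg R)
    rw [hval, hsplit]
    have := abs_le.1 herr
    linarith
  intro f hfQ hfne
  have hres : res T f ≠ 0 := ne_zero_res T hT (hQ.1 f hfQ) hfne
  have hpos : 0 < ‖res T f‖ := norm_pos_iff.2 hres
  have hmem := mem_sphere_smul T hQ hfQ hres
  have := hyK _ hmem
  rw [Pi.smul_apply, smul_eq_mul] at this
  have h2 := mul_pos hpos this
  rwa [← mul_assoc, mul_inv_cancel₀ hpos.ne', one_mul] at h2

lemma cofinal_of_pos (T : Finset A) (hT : Subgroup.closure (T : Set A) = ⊤)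
    {Q : Set (A → ℝ)} (hQ : IsFunctionalCone Q) (hcl : IsClosed Q) {y : A}
    (hy : ∀ f ∈ Q, f ≠ 0 → 0 < f y) :
    ConePreorder Q 1 y ∧ ∀ x : A, ∃ n : ℕ, ConePreorder Q x (y ^ n) := by
  classical
  constructor
  · intro f hf
    rw [inv_one, mul_one]
    by_cases h : f = 0
    · simp [h]
    · exact (hy f hf h).le
  · intro x
    set K : Set (A → ℝ) := {f ∈ Q | ‖res T f‖ = 1} with hKdef
    have hKcpt : IsCompact K := isCompactSphereAux T hT hQ.1 hcl
    -- reduce the claim to elements of K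
    suffices h : ∃ n : ℕ, ∀ f ∈ K, 0 ≤ f (y ^ n * x⁻¹) by
      obtain ⟨n, hn⟩ := h
      refine ⟨n, fun f hf => ?_⟩
      by_cases h0 : f = 0
      · simp [h0]
      · have hres : res T f ≠ 0 := ne_zero_res T hT (hQ.1 f hf) h0
        have hpos : 0 < ‖res T f‖ := norm_pos_iff.2 hres
        have hmem := mem_sphere_smul T hQ hf hres
        have h1 := hn _ hmem
        rw [Pi.smul_apply, smul_eq_mul] at h1
        nlinarith [inv_pos.2 hpos, h1, hpos]
    rcases K.eq_empty_or_nonempty with hK | hKne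
    · exact ⟨0, fun f hf => by rw [hK] at hf; exact absurd hf (Set.notMem_empty f)⟩
    obtain ⟨f₀, hf₀K, hmin⟩ := hKcpt.exists_isMinOn hKne (continuous_apply y).continuousOn
    obtain ⟨f₁, hf₁K, hmax⟩ := hKcpt.exists_isMaxOn hKne (continuous_apply x).continuousOn
    have hf₀ne : f₀ ≠ 0 := by
      intro h
      have := hf₀K.2
      rw [h, map_zero, norm_zero] at this
      exact one_ne_zero this.symm
    have hδ : 0 < f₀ y := hy f₀ hf₀K.1 hf₀ne
    set δ := f₀ y with hδdef
    set M := f₁ x with hMdef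
    refine ⟨⌈M / δ⌉₊, fun f hf => ?_⟩
    have hch : IsAddChar f := hQ.1 f hf.1
    have hval : f (y ^ ⌈M / δ⌉₊ * x⁻¹) = (⌈M / δ⌉₊ : ℝ) * f y - f x := by
      rw [hch, char_pow hch, char_inv hch]; ring
    have h1 : δ ≤ f y := hmin hf
    have h2 : f x ≤ M := hmax hf
    have h3 : M ≤ (⌈M / δ⌉₊ : ℝ) * δ := by
      rw [← div_le_iff₀ hδ]
      exact Nat.le_ceil _
    have h4 : (⌈M / δ⌉₊ : ℝ) * δ ≤ (⌈M / δ⌉₊ : ℝ) * f y :=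
      mul_le_mul_of_nonneg_left h1 (Nat.cast_nonneg _)
    rw [hval]
    linarith

end AuxiliaryLemmas

/-- for closed salient cones `Q₁ ⊆ Q₀` in `(A ⊗_ℤ ℝ)^*` there exists
`y ∈ A` which is simultaneously `Q₀`-cofinal and `Q₁`-cofinal, i.e. `0 ⪯_{Q_j} y` and
every `x` with `0 ⪯_{Q_j} x` satisfies `x ⪯_{Q_j} yⁿ` for some `n`, for `j = 0, 1`. -/
theorem exists_simultaneous_cofinal_element {A : Type*} [CommGroup A] [Group.FG A]
    (Q₀ Q₁ : Set (A → ℝ))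
    (hQ₀ : IsFunctionalCone Q₀) (hclosed₀ : IsClosed Q₀) (hsalient₀ : IsSalientCone Q₀)
    (hQ₁ : IsFunctionalCone Q₁) (hclosed₁ : IsClosed Q₁) (hsalient₁ : IsSalientCone Q₁)
    (hsub : Q₁ ⊆ Q₀) :
    ∃ y : A,
      (ConePreorder Q₀ 1 y ∧
        ∀ x : A, ConePreorder Q₀ 1 x → ∃ n : ℕ, ConePreorder Q₀ x (y ^ n)) ∧
      (ConePreorder Q₁ 1 y ∧
        ∀ x : A, ConePreorder Q₁ 1 x → ∃ n : ℕ, ConePreorder Q₁ x (y ^ n)) := by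
  classical
  obtain ⟨n, S, -, hS⟩ := Group.fg_iff'.mp ‹Group.FG A›
  obtain ⟨y, hy⟩ := exists_pos S hS hQ₀ hclosed₀ hsalient₀
  have hy₁ : ∀ f ∈ Q₁, f ≠ 0 → 0 < f y := fun f hf => hy f (hsub hf)
  obtain ⟨h₀a, h₀b⟩ := cofinal_of_pos S hS hQ₀ hclosed₀ hy
  obtain ⟨h₁a, h₁b⟩ := cofinal_of_pos S hS hQ₁ hclosed₁ hy₁
  exact ⟨y, ⟨h₀a, fun x _ => h₀b x⟩, ⟨h₁a, fun x _ => h₁b x⟩⟩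
end

section
/- Let A be a finitely generated abelian group and Q ⊂ (A ⊗_ℤ ℝ)^* a closed salient cone. Then (A, ⪯_Q) is a directed set: ⪯_Q is reflexive and transitive, and for any x₀, x₁ ∈ A there exists x₂ ∈ A with x₀ ⪯_Q x₂ and x₁ ⪯_Q x₂. -/
namespace ConeAux

variable {A : Type*} [CommGroup A] {f : A → ℝ}

theorem char_one (hf : IsAddChar f) : f 1 = 0 := by
  have := hf 1 1; simp at this; linarith

theorem char_inv (hf : IsAddChar f) (x : A) : f x⁻¹ = - f x := by
  have := hf x x⁻¹; rw [mul_inv_cancel, char_one hf] at this; linarith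

theorem char_npow (hf : IsAddChar f) (x : A) (p : ℕ) : f (x ^ p) = p * f x := by
  induction p with
  | zero => simp [char_one hf]
  | succ p ih => rw [pow_succ, hf, ih]; push_cast; ring

theorem char_zpow (hf : IsAddChar f) (x : A) (p : ℤ) : f (x ^ p) = p * f x := by
  cases p with
  | ofNat p => rw [Int.ofNat_eq_coe, zpow_natCast, char_npow hf]; push_cast; ring
  | negSucc p =>
      rw [zpow_negSucc, char_inv hf, char_npow hf]; push_cast; ring

theorem char_prod {ι : Type*} (hf : IsAddChar f) (s : Finset ι) (x : ι → A) (m : ι → ℤ) :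
    f (∏ i ∈ s, x i ^ m i) = ∑ i ∈ s, (m i : ℝ) * f (x i) := by
  classical
  induction s using Finset.induction with
  | empty => simp [char_one hf]
  | insert _ _ hi ih => rw [Finset.prod_insert hi, hf, char_zpow hf, Finset.sum_insert hi, ih]

/-- every element of a commutative group is an integer-power product of any generating family -/
theorem exists_rep {n : ℕ} {g : Fin n → A} (hg : Subgroup.closure (Set.range g) = ⊤) (a : A) :
    ∃ m : Fin n → ℤ, a = ∏ i, g i ^ m i := by
  classical
  let H : Subgroup A :=
    { carrier := {a | ∃ m : Fin n → ℤ, a = ∏ i, g i ^ m i}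
      one_mem' := ⟨0, by simp⟩
      mul_mem' := by
        rintro a b ⟨ma, rfl⟩ ⟨mb, rfl⟩
        exact ⟨ma + mb, by simp [zpow_add, Finset.prod_mul_distrib]⟩
      inv_mem' := by
        rintro a ⟨ma, rfl⟩
        exact ⟨-ma, by simp [zpow_neg, ← Finset.prod_inv_distrib]⟩ }
  have hle : Subgroup.closure (Set.range g) ≤ H := by
    rw [Subgroup.closure_le]
    rintro _ ⟨i, rfl⟩
    refine ⟨Pi.single i 1, ?_⟩
    rw [Fintype.prod_eq_single i (fun j hj => by simp [Pi.single_eq_of_ne hj])]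
    simp
  have : a ∈ H := hle (by rw [hg]; trivial)
  exact this


open scoped RealInnerProductSpace


/-- A closed salient convex cone in Euclidean space admits an integer vector making a
uniformly positive pairing with the cone. -/
theorem exists_int_separating {n : ℕ} {C : Set (EuclideanSpace ℝ (Fin n))}
    (hCadd : ∀ c ∈ C, ∀ d ∈ C, c + d ∈ C)
    (hCsmul : ∀ r : ℝ, 0 < r → ∀ c ∈ C, r • c ∈ C)
    (hCsal : ∀ c ∈ C, c ≠ 0 → -c ∉ C)
    (hCclosed : IsClosed C) :
    ∃ m : Fin n → ℤ, ∃ ε : ℝ, 0 < ε ∧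
      ∀ c ∈ C, ε * ‖c‖ ≤ ∑ i, c i * (m i : ℝ) := by
  classical
  let V := EuclideanSpace ℝ (Fin n)
  -- the cone with 0 adjoined
  let K : ConvexCone ℝ V :=
    { carrier := insert 0 C
      smul_mem' := by
        rintro r hr x (rfl | hx)
        · exact Or.inl (smul_zero r)
        · exact Or.inr (hCsmul r hr x hx)
      add_mem' := by
        rintro x (rfl | hx) y (rfl | hy)
        · simpa using Or.inl rfl
        · simpa using Or.inr hy
        · simpa using Or.inr hx
        · exact Or.inr (hCadd x hx y hy) }
  have hKne : (K : Set V).Nonempty := ⟨0, Or.inl rfl⟩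
  have hKclosed : IsClosed (K : Set V) := by
    show IsClosed (insert (0 : V) C)
    rw [Set.insert_eq]
    exact isClosed_singleton.union hCclosed
  let Kp : ProperCone ℝ V := { K.toPointedCone (Or.inl rfl) with isClosed' := hKclosed }
  have hdd : (ProperCone.innerDual (ProperCone.innerDual (K : Set V) : Set V) : Set V)
      = (K : Set V) :=
    congrArg (fun P : ProperCone ℝ V => (P : Set V)) (ProperCone.innerDual_innerDual Kp)
  set D : ProperCone ℝ V := ProperCone.innerDual (K : Set V) with hD
  -- D spans
  have hspan : Submodule.span ℝ (D : Set V) = ⊤ := by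
    by_contra h
    have hbot : (Submodule.span ℝ (D : Set V))ᗮ ≠ ⊥ := by
      simp only [ne_eq, Submodule.orthogonal_eq_bot_iff]; exact h
    obtain ⟨u, hu, hune⟩ := Submodule.exists_mem_ne_zero_of_ne_bot hbot
    have horth : ∀ x ∈ (D : Set V), ⟪x, u⟫ = 0 := fun x hx =>
      (Submodule.mem_orthogonal _ u).mp hu x (Submodule.subset_span hx)
    have hu1 : u ∈ (K : Set V) := by
      rw [← hdd]
      intro x hx
      show 0 ≤ ⟪x, u⟫
      rw [horth x hx]
    have hu2 : -u ∈ (K : Set V) := by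
      rw [← hdd]
      intro x hx
      show 0 ≤ ⟪x, -u⟫
      rw [inner_neg_right, horth x hx, neg_zero]
    rcases hu1 with h1 | h1
    · exact hune h1
    rcases hu2 with h2 | h2
    · exact hune (neg_eq_zero.mp h2)
    exact hCsal u h1 hune h2
  -- interior point of D
  have h0D : (0 : V) ∈ (D : Set V) := by
    rw [SetLike.mem_coe, hD, ProperCone.mem_innerDual]; intro x _; simp
  have haff : affineSpan ℝ (D : Set V) = ⊤ := by
    rw [AffineSubspace.affineSpan_eq_top_iff_vectorSpan_eq_top_of_nonempty ℝ V V ⟨0, h0D⟩,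
      vectorSpan_eq_span_vsub_set_right ℝ h0D]
    have : (· -ᵥ (0:V)) '' (D : Set V) = (D : Set V) := by
      ext x; simp [vsub_eq_sub]
    rw [this, hspan]
  obtain ⟨w, hw⟩ := (D.convex.interior_nonempty_iff_affineSpan_eq_top).mpr haff
  obtain ⟨δ, hδ, hball⟩ := Metric.isOpen_iff.mp isOpen_interior w hw
  have hballD : Metric.ball w δ ⊆ (D : Set V) :=
    fun y hy => interior_subset (hball hy)
  -- uniform positivity of w on C
  have hsep : ∀ c ∈ C, δ / 2 * ‖c‖ ≤ ⟪c, w⟫ := by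
    intro c hc
    rcases eq_or_ne c 0 with rfl | hcne
    · simp
    have hcnorm : (0:ℝ) < ‖c‖ := norm_pos_iff.mpr hcne
    have hmem : w - (δ / 2 * ‖c‖⁻¹) • c ∈ Metric.ball w δ := by
      rw [Metric.mem_ball, dist_eq_norm]
      have : w - (δ / 2 * ‖c‖⁻¹) • c - w = -((δ / 2 * ‖c‖⁻¹) • c) := by abel
      rw [this, norm_neg, norm_smul, Real.norm_eq_abs,
        abs_of_pos (by positivity)]
      rw [mul_assoc, inv_mul_cancel₀ hcnorm.ne', mul_one]
      linarith
    have h0 : (0:ℝ) ≤ ⟪c, w - (δ / 2 * ‖c‖⁻¹) • c⟫ := by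
      have := hballD hmem
      exact (ProperCone.mem_innerDual.mp this) (Or.inr hc)
    rw [inner_sub_right, real_inner_smul_right, real_inner_self_eq_norm_sq] at h0
    have : δ / 2 * ‖c‖⁻¹ * ‖c‖ ^ 2 = δ / 2 * ‖c‖ := by
      field_simp
    nlinarith
  -- rational approximation of w by an integer vector (after scaling)
  set s : ℝ := Real.sqrt n + 1 with hs
  have hspos : 0 < s := by positivity
  set ε' : ℝ := δ / (4 * s) with hε'
  have hε'pos : 0 < ε' := by positivity
  have hq : ∀ i : Fin n, ∃ q : ℚ, |w i - (q : ℝ)| < ε' := fun i => exists_rat_near (w i) hε'pos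
  choose q hqnear using hq
  set N : ℕ := ∏ i, (q i).den with hN
  have hNpos : 0 < N := Finset.prod_pos fun i _ => (q i).pos
  set m : Fin n → ℤ := fun i => (q i).num * ((N / (q i).den : ℕ) : ℤ) with hm
  have hmcast : ∀ i, (m i : ℝ) = (q i : ℝ) * N := by
    intro i
    have hdvd : (q i).den ∣ N := Finset.dvd_prod_of_mem _ (Finset.mem_univ i)
    have hden : ((q i).den : ℝ) ≠ 0 := Nat.cast_ne_zero.mpr (q i).den_nz
    have h1 : ((N / (q i).den : ℕ) : ℝ) = (N : ℝ) / ((q i).den : ℝ) := Nat.cast_div hdvd hden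
    rw [hm]
    simp only [Int.cast_mul, Int.cast_natCast, h1]
    rw [Rat.cast_def]
    field_simp
  set qv : EuclideanSpace ℝ (Fin n) := WithLp.toLp 2 (fun i => (q i : ℝ)) with hqv
  have hqwnorm : ‖qv - w‖ ≤ Real.sqrt n * ε' := by
    rw [EuclideanSpace.norm_eq]
    have hsum : (∑ i, ‖(qv - w) i‖ ^ 2) ≤ (n : ℝ) * ε' ^ 2 := by
      calc (∑ i, ‖(qv - w) i‖ ^ 2) ≤ ∑ _i : Fin n, ε' ^ 2 := by
            refine Finset.sum_le_sum fun i _ => ?_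
            have hi : |(q i : ℝ) - w i| ≤ ε' := by
              rw [abs_sub_comm]; exact (hqnear i).le
            have : ‖(qv - w) i‖ = |(q i : ℝ) - w i| := by
              rw [show (qv - w) i = (q i : ℝ) - w i from rfl, Real.norm_eq_abs]
            rw [this]
            exact pow_le_pow_left₀ (abs_nonneg _) hi 2
        _ = (n : ℝ) * ε' ^ 2 := by simp [Finset.sum_const, nsmul_eq_mul]
    calc Real.sqrt (∑ i, ‖(qv - w) i‖ ^ 2) ≤ Real.sqrt ((n : ℝ) * ε' ^ 2) :=
          Real.sqrt_le_sqrt hsum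
      _ = Real.sqrt n * ε' := by
          rw [Real.sqrt_mul (Nat.cast_nonneg n), Real.sqrt_sq hε'pos.le]
  refine ⟨m, δ / 4, by positivity, ?_⟩
  intro c hc
  have h1 : ∑ i, c i * (m i : ℝ) = N * ⟪c, qv⟫ := by
    simp only [PiLp.inner_apply, RCLike.inner_apply, conj_trivial]
    rw [Finset.mul_sum]
    refine Finset.sum_congr rfl fun i _ => ?_
    have : qv i = (q i : ℝ) := by rw [hqv]
    rw [this, hmcast i]
    ring
  have h3 : |⟪c, qv - w⟫| ≤ ‖c‖ * (Real.sqrt n * ε') :=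
    (abs_real_inner_le_norm _ _).trans
      (mul_le_mul_of_nonneg_left hqwnorm (norm_nonneg c))
  have h4 : Real.sqrt n * ε' ≤ δ / 4 := by
    have h4a : Real.sqrt n ≤ s := by rw [hs]; linarith
    have h4b : s * ε' = δ / 4 := by rw [hε']; field_simp
    calc Real.sqrt n * ε' ≤ s * ε' := mul_le_mul_of_nonneg_right h4a hε'pos.le
      _ = δ / 4 := h4b
  have h5 : δ / 2 * ‖c‖ ≤ ⟪c, w⟫ := hsep c hc
  have h2 : ⟪c, qv⟫ = ⟪c, w⟫ + ⟪c, qv - w⟫ := by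
    rw [inner_sub_right]; ring
  have h6 : δ / 4 * ‖c‖ ≤ ⟪c, qv⟫ := by
    have h3' := (abs_le.mp h3).1
    have hcn := norm_nonneg c
    nlinarith
  rw [h1]
  have hN1 : (1 : ℝ) ≤ (N : ℝ) := by exact_mod_cast hNpos
  have hpos : (0 : ℝ) ≤ ⟪c, qv⟫ := le_trans (by positivity) h6
  have hfin : (1 : ℝ) * ⟪c, qv⟫ ≤ (N : ℝ) * ⟪c, qv⟫ :=
    mul_le_mul_of_nonneg_right hN1 hpos
  linarith

end ConeAux

open scoped RealInnerProductSpace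

/-- for a closed salient cone `Q ⊆ (A ⊗_ℤ ℝ)^*` (`A` finitely generated),
`(A, ⪯_Q)` is a directed set: `⪯_Q` is reflexive, transitive, and any two elements have a
common upper bound. -/
theorem conePreorder_isDirected {A : Type*} [CommGroup A] [Group.FG A]
    (Q : Set (A → ℝ)) (hQ : IsFunctionalCone Q) (hclosed : IsClosed Q)
    (hsalient : IsSalientCone Q) :
    (∀ x : A, ConePreorder Q x x) ∧
      (∀ x y z : A, ConePreorder Q x y → ConePreorder Q y z → ConePreorder Q x z) ∧
      (∀ x₀ x₁ : A, ∃ x₂ : A, ConePreorder Q x₀ x₂ ∧ ConePreorder Q x₁ x₂) := by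
  classical
  have hchar : ∀ f ∈ Q, IsAddChar f := hQ.1
  refine ⟨?_, ?_, ?_⟩
  · -- reflexivity
    intro x f hf
    rw [mul_inv_cancel, ConeAux.char_one (hchar f hf)]
  · -- transitivity
    intro x y z h1 h2 f hf
    have hxyz : (z * y⁻¹) * (y * x⁻¹) = z * x⁻¹ := by group
    have := hchar f hf (z * y⁻¹) (y * x⁻¹)
    rw [hxyz] at this
    rw [this]
    exact add_nonneg (h2 f hf) (h1 f hf)
  -- directedness
  -- a finite generating family
  obtain ⟨S, hclos⟩ := Group.fg_def.mp ‹Group.FG A›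
  set n : ℕ := S.card with hn
  set g : Fin n → A := fun i => (S.equivFin.symm i : A) with hgdef
  have hrange : Set.range g = (S : Set A) := by
    ext a
    constructor
    · rintro ⟨i, rfl⟩; exact (S.equivFin.symm i).2
    · intro ha; exact ⟨S.equivFin ⟨a, ha⟩, by simp [hgdef]⟩
  have hg : Subgroup.closure (Set.range g) = ⊤ := by rw [hrange, hclos]
  -- integer representations
  have hrep := fun a => ConeAux.exists_rep hg a
  choose k hk using hrep
  have hfa : ∀ f ∈ Q, ∀ a : A, f a = ∑ i, (k a i : ℝ) * f (g i) := by
    intro f hf a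
    conv_lhs => rw [hk a]
    exact ConeAux.char_prod (hchar f hf) _ _ _
  -- the image cone in Euclidean space
  set χ : (A → ℝ) → EuclideanSpace ℝ (Fin n) := fun f => WithLp.toLp 2 (fun i => f (g i)) with hχ
  set C : Set (EuclideanSpace ℝ (Fin n)) := χ '' Q with hC
  have hχadd : ∀ f f' : A → ℝ, χ (f + f') = χ f + χ f' := fun _ _ => rfl
  have hχsmul : ∀ (r : ℝ) (f : A → ℝ), χ (r • f) = r • χ f := fun _ _ => rfl
  have hCadd : ∀ c ∈ C, ∀ d ∈ C, c + d ∈ C := by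
    rintro _ ⟨f, hf, rfl⟩ _ ⟨f', hf', rfl⟩
    have hmem : f + f' ∈ Q := by
      have := hQ.2 f hf f' hf' 1 1 one_pos one_pos
      simpa using this
    exact ⟨f + f', hmem, hχadd f f'⟩
  have hCsmul : ∀ r : ℝ, 0 < r → ∀ c ∈ C, r • c ∈ C := by
    rintro r hr _ ⟨f, hf, rfl⟩
    have hmem : r • f ∈ Q := by
      have := hQ.2 f hf f hf (r / 2) (r / 2) (by linarith) (by linarith)
      have h2 : (r / 2) • f + (r / 2) • f = r • f := by
        rw [← add_smul]; norm_num
      rwa [h2] at this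
    exact ⟨r • f, hmem, hχsmul r f⟩
  have hχzero : ∀ f : A → ℝ, f ∈ Q → χ f = 0 → f = 0 := by
    intro f hf h0
    funext a
    have := hfa f hf a
    have hz : ∀ i, f (g i) = 0 := fun i => congrArg (fun v : EuclideanSpace ℝ (Fin n) => v i) h0
    simp only [hz, mul_zero, Finset.sum_const_zero] at this
    simpa using this
  have hCsal : ∀ c ∈ C, c ≠ 0 → -c ∉ C := by
    rintro _ ⟨f, hf, rfl⟩ hne ⟨f', hf', hEq⟩
    have hsum : f + f' ∈ Q := by
      have := hQ.2 f hf f' hf' 1 1 one_pos one_pos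
      simpa using this
    have hχs : χ (f + f') = 0 := by
      rw [hχadd]
      ext i
      have := congrArg (fun v : EuclideanSpace ℝ (Fin n) => v i) hEq
      have h1 : χ f' i = -(χ f i) := this
      show χ f i + χ f' i = 0
      rw [h1]; ring
    have hsum0 : f + f' = 0 := hχzero _ hsum hχs
    have hf'eq : f' = -f := by
      funext a
      have := congrFun hsum0 a
      simp only [Pi.add_apply, Pi.zero_apply] at this
      simp only [Pi.neg_apply]
      linarith
    have hf0 : f ≠ 0 := by
      intro h
      apply hne
      rw [h]
      ext i
      rfl
    exact hsalient f hf hf0 (hf'eq ▸ hf')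
  -- closedness of the image cone
  set F : EuclideanSpace ℝ (Fin n) → (A → ℝ) := fun c a => ∑ i, (k a i : ℝ) * c i with hF
  have hFcont : Continuous F := by
    refine continuous_pi fun a => ?_
    exact continuous_finset_sum _ fun i _ =>
      continuous_const.mul ((continuous_apply i).comp (PiLp.continuous_ofLp 2 _))
  have hFχ : ∀ f ∈ Q, F (χ f) = f := by
    intro f hf
    funext a
    exact (hfa f hf a).symm
  have hCeq : C = {c : EuclideanSpace ℝ (Fin n) | F c ∈ Q ∧ ∀ i, F c (g i) = c i} := by
    ext c
    constructor
    · rintro ⟨f, hf, rfl⟩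
      refine ⟨by rw [hFχ f hf]; exact hf, fun i => by rw [hFχ f hf]⟩
    · rintro ⟨h1, h2⟩
      exact ⟨F c, h1, PiLp.ext fun i => h2 i⟩
  have hCclosed : IsClosed C := by
    rw [hCeq]
    have h1 : IsClosed {c : EuclideanSpace ℝ (Fin n) | F c ∈ Q} := hclosed.preimage hFcont
    have h2 : IsClosed {c : EuclideanSpace ℝ (Fin n) | ∀ i, F c (g i) = c i} := by
      have : {c : EuclideanSpace ℝ (Fin n) | ∀ i, F c (g i) = c i}
          = ⋂ i, {c | F c (g i) = c i} := by ext; simp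
      rw [this]
      exact isClosed_iInter fun i => isClosed_eq
        ((continuous_apply (g i)).comp hFcont)
        ((continuous_apply i).comp (PiLp.continuous_ofLp 2 _))
    exact h1.inter h2
  -- the integer separating vector
  obtain ⟨m, ε, hε, hbound⟩ := ConeAux.exists_int_separating hCadd hCsmul hCsal hCclosed
  set z : A := ∏ i, g i ^ m i with hz
  have hfz : ∀ f ∈ Q, ε * ‖χ f‖ ≤ f z := by
    intro f hf
    have h1 : f z = ∑ i, (m i : ℝ) * f (g i) := ConeAux.char_prod (hchar f hf) _ _ _
    have h2 : ∑ i, (χ f) i * (m i : ℝ) = ∑ i, (m i : ℝ) * f (g i) :=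
      Finset.sum_congr rfl fun i _ => mul_comm _ _
    rw [h1, ← h2]
    exact hbound (χ f) ⟨f, hf, rfl⟩
  -- common upper bounds
  intro x₀ x₁
  set a : A := x₁ * x₀⁻¹ with ha
  set kva : EuclideanSpace ℝ (Fin n) := WithLp.toLp 2 (fun i => (k a i : ℝ)) with hkva
  obtain ⟨p, hp⟩ := exists_nat_ge (‖kva‖ / ε)
  have hpK : ‖kva‖ ≤ p * ε := by
    rw [div_le_iff₀ hε] at hp
    linarith
  refine ⟨x₀ * z ^ p, ?_, ?_⟩
  · intro f hf
    have heq : x₀ * z ^ p * x₀⁻¹ = z ^ p := by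
      rw [mul_comm x₀ (z ^ p), mul_assoc, mul_inv_cancel, mul_one]
    rw [heq, ConeAux.char_npow (hchar f hf)]
    have := hfz f hf
    have hnorm : (0:ℝ) ≤ ‖χ f‖ := norm_nonneg _
    have : (0:ℝ) ≤ f z := le_trans (by positivity) this
    positivity
  · intro f hf
    have heq : x₀ * z ^ p * x₁⁻¹ = z ^ p * a⁻¹ := by
      rw [ha, mul_inv_rev, inv_inv]
      rw [mul_comm x₀ (z ^ p), mul_assoc]
    rw [heq, hchar f hf, ConeAux.char_inv (hchar f hf), ConeAux.char_npow (hchar f hf)]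
    -- bound f a
    have hfaeq : f a = ⟪kva, χ f⟫ := by
      rw [hfa f hf a]
      simp only [PiLp.inner_apply, RCLike.inner_apply, conj_trivial]
      exact Finset.sum_congr rfl fun i _ => mul_comm _ _
    have hfab : f a ≤ ‖kva‖ * ‖χ f‖ := by
      rw [hfaeq]
      exact real_inner_le_norm _ _
    have hnorm : (0:ℝ) ≤ ‖χ f‖ := norm_nonneg _
    have h1 : f a ≤ (p * ε) * ‖χ f‖ :=
      le_trans hfab (mul_le_mul_of_nonneg_right hpK hnorm)
    have h2 : (p : ℝ) * (ε * ‖χ f‖) ≤ (p : ℝ) * f z :=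
      mul_le_mul_of_nonneg_left (hfz f hf) (Nat.cast_nonneg p)
    linarith
end

section
/- Let K be a Noetherian commutative ring, A a finitely generated abelian group, and Q ⊂ (A ⊗_ℤ ℝ)^* a salient rational polyhedral cone (the cone of nonnegative combinations of finitely many elements of (A ⊗_ℤ ℚ)^*). Then the monoid algebra F^Q_0 = K[S^Q_0], where S^Q_0 = {a ∈ A : 0 ⪯_Q a}, is a finitely generated K-algebra, and hence is Noetherian. -/
/-- A rational polyhedral cone in `(A ⊗_ℤ ℝ)^*`: the set of nonnegative real combinations
of finitely many rational functionals (i.e. elements of `(A ⊗_ℤ ℚ)^* ⊆ (A ⊗_ℤ ℝ)^*`). -/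
def IsRationalPolyhedralCone {A : Type*} [CommGroup A] (Q : Set (A → ℝ)) : Prop :=
  ∃ (k : ℕ) (w : Fin k → A → ℝ),
    (∀ i, IsAddChar (w i)) ∧ (∀ i a, ∃ q : ℚ, w i a = (q : ℝ)) ∧
      Q = {f : A → ℝ | ∃ r : Fin k → ℝ, (∀ i, 0 ≤ r i) ∧ f = ∑ i, r i • w i}



/-- Dickson-style core of Gordan's lemma. -/
theorem gordan_core {k : ℕ} (M : AddSubmonoid (Fin k → ℤ))
    (hpos : ∀ x ∈ M, ∀ i, 0 ≤ x i)
    (hsub : ∀ x ∈ M, ∀ y ∈ M, (∀ i, y i ≤ x i) → x - y ∈ M) : M.FG := by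
  classical
  set G : Set (Fin k → ℤ) :=
    {x | x ∈ M ∧ x ≠ 0 ∧ ∀ z ∈ M, z ≠ 0 → (∀ i, z i ≤ x i) → z = x} with hGdef
  have hGpwo : G.PartiallyWellOrderedOn (· ≤ ·) := by
    intro f0
    let f : ℕ → Fin k → ℤ := fun n => (f0 n).1
    have hf : ∀ n, f n ∈ G := fun n => (f0 n).2
    obtain ⟨m, n, hmn, hle0⟩ := (Set.isPWO_of_wellQuasiOrderedLE (Set.univ : Set (Fin k → ℕ)))
      (fun n => ⟨fun i => (f n i).toNat, Set.mem_univ _⟩)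
    have hle : ∀ i, (f m i).toNat ≤ (f n i).toNat := fun i => hle0 i
    refine ⟨m, n, hmn, fun i => ?_⟩
    have h1 : (f m i) ≤ ((f m i).toNat : ℤ) := Int.self_le_toNat _
    have h2 : ((f n i).toNat : ℤ) = f n i := Int.toNat_of_nonneg (hpos _ (hf n).1 i)
    calc f m i ≤ ((f m i).toNat : ℤ) := h1
      _ ≤ ((f n i).toNat : ℤ) := by exact_mod_cast hle i
      _ = f n i := h2
  have hGfin : G.Finite := by
    refine IsAntichain.finite_of_partiallyWellOrderedOn ?_ hGpwo
    intro a ha b hb hab hle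
    exact hab (hb.2.2 a ha.1 ha.2.1 fun i => hle i)
  have hclosure : ∀ x ∈ M, x ∈ AddSubmonoid.closure G := by
    intro x hx
    generalize hn : (∑ i, x i).toNat = n
    induction n using Nat.strong_induction_on generalizing x with
    | _ n ih =>
      by_cases hx0 : x = 0
      · simpa [hx0] using (AddSubmonoid.closure G).zero_mem
      · set p : ℕ → Prop := fun s =>
          ∃ y, y ∈ M ∧ y ≠ 0 ∧ (∀ i, y i ≤ x i) ∧ (∑ i, y i).toNat = s with hpdef
        have hp : ∃ s, p s := ⟨_, x, hx, hx0, fun i => le_rfl, rfl⟩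
        obtain ⟨y, hyM, hy0, hyx, hys⟩ := Nat.find_spec hp
        have hymin : ∀ z ∈ M, z ≠ 0 → (∀ i, z i ≤ y i) → z = y := by
          intro z hzM hz0 hzy
          have hzx : ∀ i, z i ≤ x i := fun i => le_trans (hzy i) (hyx i)
          have hfind : Nat.find hp ≤ (∑ i, z i).toNat :=
            Nat.find_min' hp ⟨z, hzM, hz0, hzx, rfl⟩
          have hsz : ∑ i, z i ≤ ∑ i, y i := Finset.sum_le_sum fun i _ => hzy i
          have hz0' : (0:ℤ) ≤ ∑ i, z i := Finset.sum_nonneg fun i _ => hpos _ hzM i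
          have hy0' : (0:ℤ) ≤ ∑ i, y i := Finset.sum_nonneg fun i _ => hpos _ hyM i
          have hsum : ∑ i, z i = ∑ i, y i := by omega
          have := (Finset.sum_eq_sum_iff_of_le (fun i _ => hzy i)).mp hsum
          funext i
          exact (this i (Finset.mem_univ i))
        have hyG : y ∈ G := ⟨hyM, hy0, hymin⟩
        have hxyM : x - y ∈ M := hsub x hx y hyM hyx
        have hsy_pos : 0 < ∑ i, y i := by
          obtain ⟨j, hj⟩ := Function.ne_iff.mp hy0
          have : (0:ℤ) < y j := lt_of_le_of_ne (hpos _ hyM j) (Ne.symm hj)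
          calc (0:ℤ) < y j := this
            _ ≤ ∑ i, y i := Finset.single_le_sum (fun i _ => hpos _ hyM i) (Finset.mem_univ j)
        have hsum_sub : ∑ i, (x - y) i = ∑ i, x i - ∑ i, y i := by
          simp [Pi.sub_apply, Finset.sum_sub_distrib]
        have hsy_le : ∑ i, y i ≤ ∑ i, x i := Finset.sum_le_sum fun i _ => hyx i
        have hx0' : (0:ℤ) ≤ ∑ i, x i := Finset.sum_nonneg fun i _ => hpos _ hx i
        have hlt : (∑ i, (x - y) i).toNat < n := by rw [hsum_sub]; omega
        have hxy_cl : x - y ∈ AddSubmonoid.closure G := ih _ hlt (x - y) hxyM rfl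
        have : (x - y) + y ∈ AddSubmonoid.closure G :=
          add_mem hxy_cl (AddSubmonoid.subset_closure hyG)
        simpa using this
  refine (AddSubmonoid.fg_iff M).mpr ⟨G, ?_, hGfin⟩
  exact le_antisymm (AddSubmonoid.closure_le.mpr fun g hg => hg.1) hclosure

theorem subgroup_fg_of_fg {A : Type*} [CommGroup A] [Group.FG A] (H : Subgroup A) : H.FG := by
  haveI : AddGroup.FG (Additive A) := AddGroup.fg_of_group_fg
  haveI : Module.Finite ℤ (Additive A) := Module.Finite.iff_addGroup_fg.mpr ‹_›
  have h : (AddSubgroup.toIntSubmodule (Subgroup.toAddSubgroup H)).FG := IsNoetherian.noetherian _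
  rw [Subgroup.fg_iff_add_fg]
  have := (Submodule.fg_iff_addSubgroup_fg _).mp h
  rwa [AddSubgroup.toIntSubmodule_toAddSubgroup] at this

/-- Gordan's lemma: for a salient rational polyhedral cone
`Q ⊆ (A ⊗_ℤ ℝ)^*` (`A` finitely generated) and a Noetherian commutative ring `K`,
the monoid algebra `F^Q_0 = K[S^Q_0]` of the dual monoid `S^Q_0 = {a : 0 ⪯_Q a}` is
a finitely generated `K`-algebra, and hence Noetherian. -/
theorem dualMonoidAlgebra_finiteType_and_noetherian
    {A K : Type*} [CommGroup A] [Group.FG A] [CommRing K] [IsNoetherianRing K]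
    (Q : Set (A → ℝ)) (hpoly : IsRationalPolyhedralCone Q) (hsalient : IsSalientCone Q)
    (S : Submonoid A) (hS : ∀ a : A, a ∈ S ↔ ConePreorder Q 1 a) :
    Algebra.FiniteType K (MonoidAlgebra K ↥S) ∧ IsNoetherianRing (MonoidAlgebra K ↥S) := by
  classical
  obtain ⟨k, w, hw_add, hw_rat, hQ⟩ := hpoly
  -- choose rational values
  choose q hq using hw_rat
  have hqadd : ∀ i x y, q i (x * y) = q i x + q i y := by
    intro i x y
    have := hw_add i x y
    rw [hq, hq, hq] at this
    exact_mod_cast this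
  have hq1 : ∀ i, q i 1 = 0 := by
    intro i
    have := hqadd i 1 1
    rw [mul_one] at this
    linarith
  have hqinv : ∀ i a, q i a⁻¹ = - q i a := by
    intro i a
    have := hqadd i a a⁻¹
    rw [mul_inv_cancel, hq1] at this
    linarith
  -- membership criterion for S in terms of q
  have hwQ : ∀ i, w i ∈ Q := by
    intro i
    rw [hQ]
    refine ⟨fun j => if j = i then 1 else 0, fun j => by positivity, ?_⟩
    funext a
    simp only [Finset.sum_apply, Pi.smul_apply, smul_eq_mul, ite_mul, one_mul, zero_mul]
    rw [Finset.sum_ite_eq' Finset.univ i (fun j => w j a)]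
    simp
  have hSq : ∀ a, a ∈ S ↔ ∀ i, 0 ≤ q i a := by
    intro a
    rw [hS]
    constructor
    · intro h i
      have := h (w i) (hwQ i)
      rw [inv_one, mul_one, hq] at this
      exact_mod_cast this
    · intro h f hf
      rw [inv_one, mul_one]
      rw [hQ] at hf
      obtain ⟨r, hr, rfl⟩ := hf
      simp only [Finset.sum_apply, Pi.smul_apply, smul_eq_mul]
      refine Finset.sum_nonneg fun i _ => mul_nonneg (hr i) ?_
      rw [hq]
      exact_mod_cast h i
  -- common denominator
  obtain ⟨T, hTtop, hTfin⟩ := Group.fg_iff.mp ‹Group.FG A›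
  set D : ℕ := ∏ i : Fin k, ∏ t ∈ hTfin.toFinset, (q i t).den with hDdef
  have hDpos : 0 < D := by
    refine Finset.prod_pos fun i _ => Finset.prod_pos fun t _ => (q i t).pos
  have hden_dvd : ∀ i, ∀ t ∈ T, (q i t).den ∣ D := by
    intro i t ht
    refine dvd_trans (Finset.dvd_prod_of_mem (fun t => (q i t).den) (hTfin.mem_toFinset.mpr ht)) ?_
    exact Finset.dvd_prod_of_mem (fun j => ∏ t ∈ hTfin.toFinset, (q j t).den) (Finset.mem_univ i)
  have hint : ∀ i, ∀ a, ∃ m : ℤ, (D : ℚ) * q i a = m := by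
    intro i a
    have ha : a ∈ Subgroup.closure T := by rw [hTtop]; trivial
    induction ha using Subgroup.closure_induction with
    | mem t ht =>
      obtain ⟨c, hc⟩ := hden_dvd i t ht
      refine ⟨c * (q i t).num, ?_⟩
      have hden : ((q i t).den : ℚ) * q i t = (q i t).num := by
        set nn := (q i t).num with hnn
        set dd := (q i t).den with hdd
        have h : (nn : ℚ) / (dd : ℚ) = q i t := Rat.num_div_den (q i t)
        have hd : ((dd : ℚ)) ≠ 0 := by
          have := (q i t).den_nz
          simp [hdd]
        rw [← h]
        field_simp
      rw [hc]
      push_cast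
      rw [mul_comm ((q i t).den : ℚ) (c : ℚ), mul_assoc, hden]
    | one => exact ⟨0, by simp [hq1]⟩
    | mul x y hx hy ihx ihy =>
      obtain ⟨mx, hmx⟩ := ihx
      obtain ⟨my, hmy⟩ := ihy
      exact ⟨mx + my, by rw [hqadd]; push_cast; rw [mul_add, hmx, hmy]⟩
    | inv x hx ihx =>
      obtain ⟨mx, hmx⟩ := ihx
      exact ⟨-mx, by rw [hqinv]; push_cast; rw [mul_neg, hmx]⟩
  choose z hz using fun i a => hint i a
  have hzadd : ∀ i x y, z i (x * y) = z i x + z i y := by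
    intro i x y
    have : ((z i (x * y) : ℤ) : ℚ) = ((z i x + z i y : ℤ) : ℚ) := by
      rw [← hz]
      push_cast
      rw [← hz, ← hz, hqadd, mul_add]
    exact_mod_cast this
  have hz1 : ∀ i, z i 1 = 0 := by
    intro i
    have : ((z i 1 : ℤ) : ℚ) = ((0 : ℤ) : ℚ) := by rw [← hz, hq1]; simp
    exact_mod_cast this
  have hzinv : ∀ i a, z i a⁻¹ = - z i a := by
    intro i a
    have : ((z i a⁻¹ : ℤ) : ℚ) = ((- z i a : ℤ) : ℚ) := by
      rw [← hz]; push_cast; rw [← hz, hqinv, mul_neg]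
    exact_mod_cast this
  have hSz : ∀ a, a ∈ S ↔ ∀ i, 0 ≤ z i a := by
    intro a
    rw [hSq]
    refine forall_congr' fun i => ?_
    constructor
    · intro h
      have : (0:ℚ) ≤ (z i a : ℚ) := by
        rw [← hz]
        positivity
      exact_mod_cast this
    · intro h
      have h' : (0:ℚ) ≤ (D : ℚ) * q i a := by rw [hz]; exact_mod_cast h
      have hD : (0:ℚ) < (D : ℚ) := by exact_mod_cast hDpos
      nlinarith
  -- the image monoid
  set M : AddSubmonoid (Fin k → ℤ) :=
    { carrier := {v | ∃ a, a ∈ S ∧ ∀ i, z i a = v i}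
      zero_mem' := ⟨1, by simp [hSz, hz1], fun i => by simp [hz1]⟩
      add_mem' := by
        rintro v u ⟨a, ha, hav⟩ ⟨b, hb, hbv⟩
        exact ⟨a * b, mul_mem ha hb, fun i => by rw [hzadd, hav i, hbv i]; rfl⟩ } with hMdef
  have hMpos : ∀ x ∈ M, ∀ i, 0 ≤ x i := by
    rintro x ⟨a, ha, hav⟩ i
    rw [← hav i]
    exact (hSz a).mp ha i
  have hMsub : ∀ x ∈ M, ∀ y ∈ M, (∀ i, y i ≤ x i) → x - y ∈ M := by
    rintro x ⟨a, ha, hav⟩ y ⟨b, hb, hbv⟩ hle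
    refine ⟨a * b⁻¹, ?_, fun i => ?_⟩
    · rw [hSz]
      intro i
      rw [hzadd, hzinv, hav i, hbv i]
      have := hle i
      omega
    · rw [hzadd, hzinv, hav i, hbv i]; rfl
  obtain ⟨Gs, hGs⟩ := gordan_core M hMpos hMsub
  have hGsM : (Gs : Set (Fin k → ℤ)) ⊆ M := by
    rw [← hGs]; exact AddSubmonoid.subset_closure
  choose σ hσS hσz using fun v (hv : v ∈ (Gs : Set (Fin k → ℤ))) => hGsM hv
  set U : Set A := Set.range (fun p : {v // v ∈ Gs} => σ p.1 (Finset.mem_coe.mpr p.2)) with hUdef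
  have hUfin : U.Finite := Set.finite_range _
  have hUS : U ⊆ (S : Set A) := by
    rintro _ ⟨p, rfl⟩
    exact hσS _ _
  have claim : ∀ v ∈ M, ∃ t ∈ Submonoid.closure U, ∀ i, z i t = v i := by
    intro v hv
    rw [← hGs] at hv
    induction hv using AddSubmonoid.closure_induction with
    | mem v hv =>
      exact ⟨σ v hv, Submonoid.subset_closure ⟨⟨v, Finset.mem_coe.mp hv⟩, rfl⟩, hσz v hv⟩
    | zero => exact ⟨1, one_mem _, fun i => by simp [hz1]⟩
    | add x y hx hy ihx ihy =>
      obtain ⟨tx, htx, hzx⟩ := ihx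
      obtain ⟨ty, hty, hzy⟩ := ihy
      exact ⟨tx * ty, mul_mem htx hty, fun i => by rw [hzadd, hzx i, hzy i]; rfl⟩
  -- the kernel subgroup
  set Hker : Subgroup A :=
    { carrier := {a | ∀ i, z i a = 0}
      one_mem' := fun i => hz1 i
      mul_mem' := by
        intro a b ha hb i
        rw [hzadd, ha i, hb i]
        ring
      inv_mem' := by
        intro a ha i
        rw [hzinv, ha i]
        ring } with hHdef
  obtain ⟨F, hF⟩ := subgroup_fg_of_fg Hker
  have hFS : (F : Set A) ∪ (F : Set A)⁻¹ ⊆ (S : Set A) := by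
    have hHS : (Hker : Set A) ⊆ (S : Set A) := by
      intro a ha
      rw [SetLike.mem_coe, hSz]
      intro i
      rw [ha i]
    rintro x (hx | hx)
    · exact hHS (by rw [← hF]; exact Subgroup.subset_closure hx)
    · refine hHS ?_
      have : x⁻¹ ∈ Hker := by rw [← hF]; exact Subgroup.subset_closure hx
      simpa using (Hker.inv_mem this)
  have hSfg : S.FG := by
    rw [Submonoid.fg_iff]
    refine ⟨U ∪ ((F : Set A) ∪ (F : Set A)⁻¹), ?_, ?_⟩
    · refine le_antisymm (Submonoid.closure_le.mpr ?_) ?_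
      · exact Set.union_subset hUS hFS
      · intro s hs
        have hvM : (fun i => z i s) ∈ M := ⟨s, hs, fun i => rfl⟩
        obtain ⟨t, htU, hzt⟩ := claim _ hvM
        have hker : s * t⁻¹ ∈ Hker := by
          intro i
          rw [hzadd, hzinv, hzt i]
          ring
        have hker' : s * t⁻¹ ∈ Submonoid.closure ((F : Set A) ∪ (F : Set A)⁻¹) := by
          rw [← Subgroup.closure_toSubmonoid]
          rw [hF]
          exact hker
        have h1 : s * t⁻¹ ∈ Submonoid.closure (U ∪ ((F : Set A) ∪ (F : Set A)⁻¹)) :=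
          Submonoid.closure_mono Set.subset_union_right hker'
        have h2 : t ∈ Submonoid.closure (U ∪ ((F : Set A) ∪ (F : Set A)⁻¹)) :=
          Submonoid.closure_mono Set.subset_union_left htU
        have := mul_mem h1 h2
        rwa [inv_mul_cancel_right] at this
    · exact hUfin.union (F.finite_toSet.union F.finite_toSet.inv)
  haveI : Monoid.FG ↥S := (Monoid.fg_iff_submonoid_fg S).mpr hSfg
  refine ⟨inferInstance, ?_⟩
  exact Algebra.FiniteType.isNoetherianRing K (MonoidAlgebra K ↥S)
end

section
/- Let K be a commutative ring, A a finitely generated abelian group, Q ⊂ (A ⊗_ℤ ℝ)^* a closed salient cone, and y ∈ A a Q-cofinal element. Define the positive Novikov ring Λ^{A,Q,+}_K as the inverse limit over x ∈ A (ordered by ⪯_Q) of the quotients F^Q_0 / (F^Q_0 ∩ F^Q_x). Then the natural inclusion F^Q_0 ↪ Λ^{A,Q,+}_K extends to a ring isomorphism from the (y)-adic completion of F^Q_0 onto Λ^{A,Q,+}_K; equivalently, Λ^{A,Q,+}_K ≅ lim_m F^Q_0/(y)ᵐ. -/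
/-- The inverse limit ring `lim_i R ⧸ I i` of the quotients of `R` by a family of ideals,
along a relation `rel` for which `rel i j` means that there is a transition map
`R ⧸ I j → R ⧸ I i` (i.e. `I j ≤ I i`); it is realized as the subring of compatible
families inside the product `Π i, R ⧸ I i`.  Compatibility of a family `p` is expressed
by: any representative of `p j` also represents `p i` whenever `rel i j`. -/
def RingInvLimit {R : Type*} [CommRing R] {ι : Type*} (rel : ι → ι → Prop)
    (I : ι → Ideal R) (hle : ∀ i j, rel i j → I j ≤ I i) :
    Subring (∀ i, R ⧸ I i) where
  carrier := {p | ∀ i j, rel i j → ∀ r : R,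
    p j = Ideal.Quotient.mk (I j) r → p i = Ideal.Quotient.mk (I i) r}
  mul_mem' {p q} hp hq := by
    intro i j hij r hr
    obtain ⟨s, hs⟩ := Ideal.Quotient.mk_surjective (p j)
    obtain ⟨t, ht⟩ := Ideal.Quotient.mk_surjective (q j)
    have hpi : p i = Ideal.Quotient.mk (I i) s := hp i j hij s hs.symm
    have hqi : q i = Ideal.Quotient.mk (I i) t := hq i j hij t ht.symm
    have hmem : s * t - r ∈ I j := by
      apply Ideal.Quotient.eq.mp
      rw [map_mul, hs, ht]
      exact hr
    show p i * q i = _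
    rw [hpi, hqi, ← map_mul]
    exact Ideal.Quotient.eq.mpr (hle i j hij hmem)
  one_mem' := by
    intro i j hij r hr
    have hmem : (1 : R) - r ∈ I j := by
      apply Ideal.Quotient.eq.mp
      rw [map_one]
      exact hr
    show (1 : R ⧸ I i) = _
    rw [← map_one (Ideal.Quotient.mk (I i))]
    exact Ideal.Quotient.eq.mpr (hle i j hij hmem)
  add_mem' {p q} hp hq := by
    intro i j hij r hr
    obtain ⟨s, hs⟩ := Ideal.Quotient.mk_surjective (p j)
    obtain ⟨t, ht⟩ := Ideal.Quotient.mk_surjective (q j)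
    have hpi : p i = Ideal.Quotient.mk (I i) s := hp i j hij s hs.symm
    have hqi : q i = Ideal.Quotient.mk (I i) t := hq i j hij t ht.symm
    have hmem : s + t - r ∈ I j := by
      apply Ideal.Quotient.eq.mp
      rw [map_add, hs, ht]
      exact hr
    show p i + q i = _
    rw [hpi, hqi, ← map_add]
    exact Ideal.Quotient.eq.mpr (hle i j hij hmem)
  zero_mem' := by
    intro i j hij r hr
    have hmem : (0 : R) - r ∈ I j := by
      apply Ideal.Quotient.eq.mp
      rw [map_zero]
      exact hr
    show (0 : R ⧸ I i) = _
    rw [← map_zero (Ideal.Quotient.mk (I i))]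
    exact Ideal.Quotient.eq.mpr (hle i j hij hmem)
  neg_mem' {p} hp := by
    intro i j hij r hr
    obtain ⟨s, hs⟩ := Ideal.Quotient.mk_surjective (p j)
    have hpi : p i = Ideal.Quotient.mk (I i) s := hp i j hij s hs.symm
    have hmem : -s - r ∈ I j := by
      apply Ideal.Quotient.eq.mp
      rw [map_neg, hs]
      exact hr
    show -p i = _
    rw [hpi, ← map_neg]
    exact Ideal.Quotient.eq.mpr (hle i j hij hmem)

/-- The canonical ring homomorphism from `R` to the inverse limit `lim_i R ⧸ I i`,
sending `r` to the compatible family of its residue classes. -/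
def ringInvLimitDiag {R : Type*} [CommRing R] {ι : Type*} (rel : ι → ι → Prop)
    (I : ι → Ideal R) (hle : ∀ i j, rel i j → I j ≤ I i) :
    R →+* ↥(RingInvLimit rel I hle) where
  toFun r := ⟨fun i => Ideal.Quotient.mk (I i) r, by
    intro i j hij r' hr'
    exact Ideal.Quotient.eq.mpr (hle i j hij (Ideal.Quotient.eq.mp hr'))⟩
  map_one' := Subtype.ext (funext fun i => map_one _)
  map_mul' a b := Subtype.ext (funext fun i => map_mul _ _ _)
  map_zero' := Subtype.ext (funext fun i => map_zero _)
  map_add' a b := Subtype.ext (funext fun i => map_add _ _ _)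

/-- The `(y)`-adic completion `lim_n R/(y)ⁿ` of a commutative ring `R`, realized as the
inverse limit of the quotients by the powers of the principal ideal `(y)`. -/
def AdicCompl (R : Type*) [CommRing R] (y : R) :
    Subring (∀ n : ℕ, R ⧸ Ideal.span {y} ^ n) :=
  RingInvLimit (· ≤ ·) (fun n => Ideal.span {y} ^ n)
    (fun _ _ h => Ideal.pow_le_pow_right h)

/-- The canonical map `R → lim_n R/(y)ⁿ` into the `(y)`-adic completion. -/
def adicDiag (R : Type*) [CommRing R] (y : R) : R →+* ↥(AdicCompl R y) :=
  ringInvLimitDiag (· ≤ ·) (fun n => Ideal.span {y} ^ n)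
    (fun _ _ h => Ideal.pow_le_pow_right h)
/-- Transitivity of `⪯_Q` (for `Q` consisting of additive characters). -/
theorem conePreorder_trans {A : Type*} [CommGroup A] {Q : Set (A → ℝ)}
    (hQ : ∀ f ∈ Q, IsAddChar f) {x y z : A}
    (h1 : ConePreorder Q x y) (h2 : ConePreorder Q y z) : ConePreorder Q x z := by
  intro f hf
  have e : f (z * x⁻¹) = f (z * y⁻¹) + f (y * x⁻¹) := by
    rw [← hQ f hf (z * y⁻¹) (y * x⁻¹)]
    congr 1
    group
  rw [e]
  exact add_nonneg (h2 f hf) (h1 f hf)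

/-- The ideal `F^Q_0 ∩ F^Q_x` of the monoid algebra `F^Q_0 = K[S]`
(where `S = S^Q_0`), generated by the monoid elements `a ∈ S` with `x ⪯_Q a`. -/
noncomputable def novikovIdeal (K : Type*) [CommRing K] {A : Type*} [CommGroup A]
    (Q : Set (A → ℝ)) (S : Submonoid A) (x : A) : Ideal (MonoidAlgebra K ↥S) :=
  Ideal.span (⇑(MonoidAlgebra.of K ↥S) '' {a : ↥S | ConePreorder Q x ↑a})

theorem novikovIdeal_mono (K : Type*) [CommRing K] {A : Type*} [CommGroup A]
    {Q : Set (A → ℝ)} (hQ : ∀ f ∈ Q, IsAddChar f) (S : Submonoid A) :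
    ∀ x x' : A, ConePreorder Q x x' → novikovIdeal K Q S x' ≤ novikovIdeal K Q S x := by
  intro x x' h
  apply Ideal.span_mono
  apply Set.image_mono
  intro a ha
  exact conePreorder_trans hQ h ha

/-- The positive Novikov ring `Λ^{A,Q,+}_K`, i.e. the inverse limit over `x ∈ A`
(ordered by `⪯_Q`) of the quotients `F^Q_0 / (F^Q_0 ∩ F^Q_x)`. -/
noncomputable def posNovikov (K : Type*) [CommRing K] {A : Type*} [CommGroup A]
    (Q : Set (A → ℝ)) (hQ : ∀ f ∈ Q, IsAddChar f) (S : Submonoid A) :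
    Subring (∀ x : A, MonoidAlgebra K ↥S ⧸ novikovIdeal K Q S x) :=
  RingInvLimit (ConePreorder Q) (novikovIdeal K Q S) (novikovIdeal_mono K hQ S)

theorem isAddChar_map_one {A : Type*} [CommGroup A] {f : A → ℝ} (hf : IsAddChar f) :
    f 1 = 0 := by
  have := hf 1 1
  rw [mul_one] at this
  linarith

theorem isAddChar_map_pow {A : Type*} [CommGroup A] {f : A → ℝ} (hf : IsAddChar f)
    (x : A) : ∀ n : ℕ, f (x ^ n) = n * f x
  | 0 => by simpa [pow_zero] using isAddChar_map_one hf
  | (n + 1) => by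
    rw [pow_succ, hf, isAddChar_map_pow hf x n]
    push_cast; ring

theorem conePreorder_refl {A : Type*} [CommGroup A] {Q : Set (A → ℝ)}
    (hQ : ∀ f ∈ Q, IsAddChar f) (x : A) : ConePreorder Q x x := by
  intro f hf
  rw [mul_inv_cancel, isAddChar_map_one (hQ f hf)]

theorem conePreorder_pow_pow {A : Type*} [CommGroup A] {Q : Set (A → ℝ)}
    (hQ : ∀ f ∈ Q, IsAddChar f) {y : A} (hy : ConePreorder Q 1 y) {n k : ℕ}
    (hnk : n ≤ k) : ConePreorder Q (y ^ n) (y ^ k) := by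
  intro f hf
  have h1 : f (y ^ k * (y ^ n)⁻¹) = f (y ^ (k - n)) := by
    congr 1
    rw [← pow_sub y hnk]  -- might not exist for groups; fallback below
  have h2 : 0 ≤ f y := by simpa using hy f hf
  rw [h1, isAddChar_map_pow (hQ f hf)]
  positivity

/-- Key ideal identity: `(F^Q_{yⁿ}) = (y)ⁿ` in the monoid algebra `K[S]`. -/
theorem novikovIdeal_pow (K : Type*) [CommRing K] {A : Type*} [CommGroup A]
    {Q : Set (A → ℝ)} (hQ : ∀ f ∈ Q, IsAddChar f) (S : Submonoid A)
    (hS : ∀ a : A, a ∈ S ↔ ConePreorder Q 1 a) {y : A} (hyS : y ∈ S) (n : ℕ) :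
    novikovIdeal K Q S (y ^ n) =
      Ideal.span {MonoidAlgebra.of K ↥S ⟨y, hyS⟩} ^ n := by
  rw [Ideal.span_singleton_pow, ← map_pow]
  apply le_antisymm
  · rw [novikovIdeal, Ideal.span_le]
    rintro _ ⟨a, ha, rfl⟩
    have hbS : (↑a : A) * (y ^ n)⁻¹ ∈ S := by
      rw [hS]
      intro f hf
      simpa using ha f hf
    have hae : a = (⟨y, hyS⟩ : ↥S) ^ n * ⟨(↑a : A) * (y ^ n)⁻¹, hbS⟩ := by
      ext
      simp only [Submonoid.coe_mul, SubmonoidClass.coe_pow]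
      rw [mul_comm, inv_mul_cancel_right]
    rw [hae, map_mul]
    exact Ideal.mem_span_singleton.mpr ⟨_, rfl⟩
  · rw [Ideal.span_le, Set.singleton_subset_iff]
    apply Ideal.subset_span
    exact ⟨(⟨y, hyS⟩ : ↥S) ^ n, conePreorder_refl hQ _, rfl⟩

/-- for a closed salient cone `Q` with dual monoid `S = S^Q_0` and a
`Q`-cofinal element `y`, the natural inclusion of `F^Q_0 = K[S]` into the positive
Novikov ring `Λ^{A,Q,+}_K = lim_x F^Q_0/(F^Q_0 ∩ F^Q_x)` extends to a ring isomorphism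
from the `(y)`-adic completion `lim_m F^Q_0/(y)ᵐ` of `F^Q_0` onto `Λ^{A,Q,+}_K`. -/
theorem adicCompletion_isom_posNovikov
    {A K : Type*} [CommGroup A] [Group.FG A] [CommRing K]
    (Q : Set (A → ℝ)) (hQ : IsFunctionalCone Q) (hclosed : IsClosed Q)
    (hsalient : IsSalientCone Q)
    (S : Submonoid A) (hS : ∀ a : A, a ∈ S ↔ ConePreorder Q 1 a)
    (y : A) (hy : IsCofinalElt Q y)
    (y₀ : MonoidAlgebra K ↥S) (hy₀ : y₀ = MonoidAlgebra.of K ↥S ⟨y, (hS y).mpr hy.1⟩) :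
    ∃ e : ↥(AdicCompl (MonoidAlgebra K ↥S) y₀) ≃+* ↥(posNovikov K Q hQ.1 S),
      ∀ r : MonoidAlgebra K ↥S,
        e (adicDiag (MonoidAlgebra K ↥S) y₀ r) =
          ringInvLimitDiag (ConePreorder Q) (novikovIdeal K Q S)
            (novikovIdeal_mono K hQ.1 S) r := by
  classical
  let R := MonoidAlgebra K ↥S
  let J : A → Ideal R := novikovIdeal K Q S
  let P : ℕ → Ideal R := fun n => Ideal.span {y₀} ^ n
  have hJmono : ∀ x x' : A, ConePreorder Q x x' → J x' ≤ J x :=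
    novikovIdeal_mono K hQ.1 S
  have hkey : ∀ n : ℕ, J (y ^ n) = P n := by
    intro n
    show novikovIdeal K Q S (y ^ n) = Ideal.span {y₀} ^ n
    rw [hy₀]
    exact novikovIdeal_pow K hQ.1 S hS _ n
  choose m hm using hy.2
  have hPJ : ∀ x : A, P (m x) ≤ J x := fun x =>
    (hkey (m x)).ge.trans (hJmono x (y ^ m x) (hm x))
  -- forward map
  have φcomp : ∀ q : ↥(AdicCompl R y₀),
      (fun x => Ideal.Quotient.factor (hPJ x) (q.1 (m x))) ∈
        posNovikov K Q hQ.1 S := by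
    intro q x x' hxx' r hr
    obtain ⟨s, hs⟩ := Ideal.Quotient.mk_surjective (q.1 (max (m x) (m x')))
    have h1 : q.1 (m x) = Ideal.Quotient.mk (P (m x)) s :=
      q.2 (m x) _ (le_max_left _ _) s hs.symm
    have h2 : q.1 (m x') = Ideal.Quotient.mk (P (m x')) s :=
      q.2 (m x') _ (le_max_right _ _) s hs.symm
    simp only [h2, Ideal.Quotient.factor_mk] at hr
    simp only [h1, Ideal.Quotient.factor_mk]
    exact Ideal.Quotient.eq.mpr (hJmono x x' hxx' (Ideal.Quotient.eq.mp hr))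
  -- backward map
  have hpowrel : ∀ {n k : ℕ}, n ≤ k → ConePreorder Q (y ^ n) (y ^ k) :=
    fun h => conePreorder_pow_pow hQ.1 hy.1 h
  have ψcomp : ∀ p : ↥(posNovikov K Q hQ.1 S),
      (fun n => Ideal.Quotient.factor (hkey n).le (p.1 (y ^ n))) ∈
        AdicCompl R y₀ := by
    intro p n n' hnn' r hr
    obtain ⟨s, hs⟩ := Ideal.Quotient.mk_surjective (p.1 (y ^ n'))
    have h1 : p.1 (y ^ n) = Ideal.Quotient.mk (J (y ^ n)) s :=
      p.2 (y ^ n) (y ^ n') (hpowrel hnn') s hs.symm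
    simp only [← hs, Ideal.Quotient.factor_mk] at hr
    simp only [h1, Ideal.Quotient.factor_mk]
    exact Ideal.Quotient.eq.mpr (Ideal.pow_le_pow_right hnn' (Ideal.Quotient.eq.mp hr))
  refine ⟨{ toFun := fun q => ⟨_, φcomp q⟩
            invFun := fun p => ⟨_, ψcomp p⟩
            left_inv := ?_
            right_inv := ?_
            map_mul' := ?_
            map_add' := ?_ }, ?_⟩
  · intro q
    apply Subtype.ext
    funext n
    show Ideal.Quotient.factor (hkey n).le
      (Ideal.Quotient.factor (hPJ (y ^ n)) (q.1 (m (y ^ n)))) = q.1 n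
    obtain ⟨s, hs⟩ := Ideal.Quotient.mk_surjective (q.1 (max n (m (y ^ n))))
    have h1 : q.1 (m (y ^ n)) = Ideal.Quotient.mk (P (m (y ^ n))) s :=
      q.2 _ _ (le_max_right _ _) s hs.symm
    have h2 : q.1 n = Ideal.Quotient.mk (P n) s :=
      q.2 _ _ (le_max_left _ _) s hs.symm
    rw [h1, h2, Ideal.Quotient.factor_mk, Ideal.Quotient.factor_mk]
  · intro p
    apply Subtype.ext
    funext x
    show Ideal.Quotient.factor (hPJ x)
      (Ideal.Quotient.factor (hkey (m x)).le (p.1 (y ^ m x))) = p.1 x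
    obtain ⟨s, hs⟩ := Ideal.Quotient.mk_surjective (p.1 (y ^ m x))
    have h1 : p.1 x = Ideal.Quotient.mk (J x) s :=
      p.2 x (y ^ m x) (hm x) s hs.symm
    rw [← hs, h1, Ideal.Quotient.factor_mk, Ideal.Quotient.factor_mk]
  · intro q q'
    apply Subtype.ext
    funext x
    exact RingHom.map_mul (Ideal.Quotient.factor (hPJ x)) _ _
  · intro q q'
    apply Subtype.ext
    funext x
    exact RingHom.map_add (Ideal.Quotient.factor (hPJ x)) _ _
  · intro r
    apply Subtype.ext
    funext x
    exact Ideal.Quotient.factor_mk (hPJ x) r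
end
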